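/- arXiv:2406.01305 — 5 statements merged into one kernel-verified Lean document; each statement's English description precedes it below -/
import Mathlib

section
/- Let G be a finite group of order pq, where p and q are distinct primes. Then Γ_CCC(G), Γ_NCC(G) and Γ_SCC(G) are all cographs. -/
set_option linter.unusedSectionVars false
set_option linter.unusedVariables false


/-- The set of conjugacy classes of non-central elements of `G`. -/
def NCClass (G : Type*) [Group G] : Type _ :=
  {c : ConjClasses G // ∃ x : G, ConjClasses.mk x = c ∧ x ∉ Subgroup.center G}

/-- The conjugacy class graph associated to a property `P` of subgroups:
two distinct non-central conjugacy classes are adjacent iff they have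
representatives `a`, `b` with `P ⟨a, b⟩`. -/
def classGraph (G : Type*) [Group G] (P : Subgroup G → Prop) :
    SimpleGraph (NCClass G) where
  Adj c d := c ≠ d ∧ ∃ a b : G, ConjClasses.mk a = c.1 ∧ ConjClasses.mk b = d.1 ∧
    P (Subgroup.closure {a, b})
  symm := by
    constructor
    rintro c d ⟨hne, a, b, ha, hb, hP⟩
    refine ⟨hne.symm, b, a, hb, ha, ?_⟩
    rwa [Set.pair_comm]
  loopless := by constructor; rintro c ⟨hne, -⟩; exact hne rfl

/-- The commuting conjugacy class graph `Γ_CCC(G)`. -/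
def cccGraph (G : Type*) [Group G] : SimpleGraph (NCClass G) :=
  classGraph G (fun H => ∀ x ∈ H, ∀ y ∈ H, x * y = y * x)

/-- The nilpotent conjugacy class graph `Γ_NCC(G)`. -/
def nccGraph (G : Type*) [Group G] : SimpleGraph (NCClass G) :=
  classGraph G (fun H => Group.IsNilpotent H)

/-- The solvable conjugacy class graph `Γ_SCC(G)`. -/
def sccGraph (G : Type*) [Group G] : SimpleGraph (NCClass G) :=
  classGraph G (fun H => IsSolvable H)

/-- A graph contains an induced path `P₄` on four vertices. -/
def HasInducedP4 {V : Type*} (Γ : SimpleGraph V) : Prop :=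
  ∃ a b c d : V, a ≠ b ∧ a ≠ c ∧ a ≠ d ∧ b ≠ c ∧ b ≠ d ∧ c ≠ d ∧
    Γ.Adj a b ∧ Γ.Adj b c ∧ Γ.Adj c d ∧ ¬Γ.Adj a c ∧ ¬Γ.Adj a d ∧ ¬Γ.Adj b d

/-- A graph is a cograph iff it has no induced `P₄`. -/
def IsCograph {V : Type*} (Γ : SimpleGraph V) : Prop := ¬ HasInducedP4 Γ

/-- A graph contains an induced cycle `Cₙ`. -/
def HasInducedCycle {V : Type*} (Γ : SimpleGraph V) (n : ℕ) : Prop :=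
  ∃ f : ZMod n → V, Function.Injective f ∧
    ∀ i j : ZMod n, Γ.Adj (f i) (f j) ↔ (j = i + 1 ∨ i = j + 1)

/-- A graph is chordal iff it has no induced cycle `Cₙ` for `n ≥ 4`. -/
def IsChordal {V : Type*} (Γ : SimpleGraph V) : Prop :=
  ∀ n : ℕ, 4 ≤ n → ¬ HasInducedCycle Γ n

/-- A graph contains an induced `2K₂`. -/
def Has2K2 {V : Type*} (Γ : SimpleGraph V) : Prop :=
  ∃ a b c d : V, a ≠ b ∧ a ≠ c ∧ a ≠ d ∧ b ≠ c ∧ b ≠ d ∧ c ≠ d ∧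
    Γ.Adj a b ∧ Γ.Adj c d ∧ ¬Γ.Adj a c ∧ ¬Γ.Adj a d ∧ ¬Γ.Adj b c ∧ ¬Γ.Adj b d

/-- A graph contains an induced claw `K_{1,3}`: a vertex with three pairwise
non-adjacent neighbours. -/
def HasClaw {V : Type*} (Γ : SimpleGraph V) : Prop :=
  ∃ v a b c : V, a ≠ b ∧ a ≠ c ∧ b ≠ c ∧
    Γ.Adj v a ∧ Γ.Adj v b ∧ Γ.Adj v c ∧ ¬Γ.Adj a b ∧ ¬Γ.Adj a c ∧ ¬Γ.Adj b c

/-- A graph is claw-free iff it has no induced `K_{1,3}`. -/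
def IsClawFree {V : Type*} (Γ : SimpleGraph V) : Prop := ¬ HasClaw Γ

/-- A graph is split iff it has no induced `C₄`, `C₅` or `2K₂`. -/
def IsSplit {V : Type*} (Γ : SimpleGraph V) : Prop :=
  ¬ HasInducedCycle Γ 4 ∧ ¬ HasInducedCycle Γ 5 ∧ ¬ Has2K2 Γ

/-- A graph is threshold iff it has no induced `P₄`, `C₄`, `C₅` or `2K₂`. -/
def IsThreshold {V : Type*} (Γ : SimpleGraph V) : Prop :=
  ¬ HasInducedP4 Γ ∧ ¬ HasInducedCycle Γ 4 ∧ ¬ HasInducedCycle Γ 5 ∧ ¬ Has2K2 Γ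

/-- An EPPO group: every non-identity element has prime power order. -/
def IsEPPO (G : Type*) [Group G] : Prop :=
  ∀ g : G, g ≠ 1 → IsPrimePow (orderOf g)


namespace PQAux

open Subgroup

lemma dvd_cases {p q d : ℕ} (hp : p.Prime) (hq : q.Prime) (hd : d ∣ p * q) :
    d = 1 ∨ d = p ∨ d = q ∨ d = p * q := by
  obtain ⟨a, b, ha, hb, rfl⟩ := Nat.dvd_mul.mp hd
  rcases (hp.eq_one_or_self_of_dvd a ha) with rfl | rfl <;>
    rcases (hq.eq_one_or_self_of_dvd b hb) with rfl | rfl <;> simp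

lemma comm_of_cyclic {K : Type*} [Group K] [IsCyclic K] (x y : K) : x * y = y * x := by
  obtain ⟨g, hg⟩ := IsCyclic.exists_generator (α := K)
  obtain ⟨m, rfl⟩ := hg x
  obtain ⟨n, rfl⟩ := hg y
  exact ((Commute.refl g).zpow_zpow m n).eq

lemma comm_of_card_prime {K : Type*} [Group K] {r : ℕ} (hr : r.Prime)
    (h : Nat.card K = r) : ∀ x y : K, x * y = y * x := by
  haveI : Fact r.Prime := ⟨hr⟩
  haveI := isCyclic_of_prime_card h
  exact comm_of_cyclic

variable {G : Type*} [Group G] [Finite G] {p q : ℕ}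

lemma center_eq_bot (hp : p.Prime) (hq : q.Prime) (hcard : Nat.card G = p * q)
    (hna : ¬ ∀ a b : G, a * b = b * a) : Subgroup.center G = ⊥ := by
  have hdvd : Nat.card (center G) ∣ p * q := hcard ▸ card_subgroup_dvd_card (center G)
  have key : ∀ r : ℕ, r.Prime → Nat.card (G ⧸ center G) = r → False := by
    intro r hr hcQ
    haveI : Fact r.Prime := ⟨hr⟩
    haveI := isCyclic_of_prime_card hcQ
    exact hna (commutative_of_cyclic_center_quotient (QuotientGroup.mk' (center G))
      (le_of_eq (QuotientGroup.ker_mk' _)))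
  have hsplit := (card_eq_card_quotient_mul_card_subgroup (center G)).symm.trans hcard
  rcases dvd_cases hp hq hdvd with h1 | h1 | h1 | h1
  · exact (card_eq_one).mp h1
  · exfalso
    rw [h1, mul_comm p q] at hsplit
    exact key q hq (Nat.eq_of_mul_eq_mul_right hp.pos hsplit)
  · exfalso
    rw [h1] at hsplit
    exact key p hp (Nat.eq_of_mul_eq_mul_right hq.pos hsplit)
  · exfalso
    have : center G = ⊤ := eq_top_of_card_eq _ (h1.trans hcard.symm)
    exact hna fun a b => by
      exact Subgroup.mem_center_iff.mp (this ▸ Subgroup.mem_top b : b ∈ center G) a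

lemma centralizer_eq_zpowers (hp : p.Prime) (hq : q.Prime) (hcard : Nat.card G = p * q)
    (hna : ¬ ∀ a b : G, a * b = b * a) {x : G} (hx : x ≠ 1) :
    Subgroup.centralizer {x} = Subgroup.zpowers x := by
  have hcb := center_eq_bot hp hq hcard hna
  have hle : Subgroup.zpowers x ≤ Subgroup.centralizer {x} :=
    zpowers_le.mpr (Subgroup.mem_centralizer_iff.mpr (by rintro g rfl; rfl))
  have hdvd : Nat.card (Subgroup.centralizer {x}) ∣ p * q :=
    hcard ▸ card_subgroup_dvd_card _
  have hxmem : x ∈ Subgroup.centralizer {x} := hle (Subgroup.mem_zpowers x)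
  have hnot1 : Nat.card (Subgroup.centralizer {x}) ≠ 1 := by
    intro h1
    rw [card_eq_one.mp h1, Subgroup.mem_bot] at hxmem
    exact hx hxmem
  have hnottop : Nat.card (Subgroup.centralizer {x}) ≠ p * q := by
    intro h1
    have htop : Subgroup.centralizer {x} = ⊤ := eq_top_of_card_eq _ (h1.trans hcard.symm)
    have : x ∈ center G := Subgroup.mem_center_iff.mpr fun g => by
      have : g ∈ Subgroup.centralizer {x} := htop ▸ Subgroup.mem_top g
      have := Subgroup.mem_centralizer_iff.mp this x rfl
      exact this.symm
    exact hx (by simpa [hcb] using this)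
  have hprime : ∃ r : ℕ, r.Prime ∧ Nat.card (Subgroup.centralizer {x}) = r := by
    rcases dvd_cases hp hq hdvd with h1 | h1 | h1 | h1
    · exact absurd h1 hnot1
    · exact ⟨p, hp, h1⟩
    · exact ⟨q, hq, h1⟩
    · exact absurd h1 hnottop
  obtain ⟨r, hr, hcr⟩ := hprime
  have hordvd : orderOf x ∣ r := by
    have := card_dvd_of_le hle
    rwa [Nat.card_zpowers, hcr] at this
  have hor : orderOf x = r := by
    rcases (hr.eq_one_or_self_of_dvd _ hordvd) with h | h
    · exact absurd (orderOf_eq_one_iff.mp h) hx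
    · exact h
  exact (eq_of_le_of_card_ge hle (by rw [Nat.card_zpowers, hor, hcr])).symm

lemma commute_trans (hp : p.Prime) (hq : q.Prime) (hcard : Nat.card G = p * q)
    (hna : ¬ ∀ a b : G, a * b = b * a) {a b c : G} (ha : a ≠ 1) (hb : b ≠ 1)
    (hab : a * b = b * a) (hbc : b * c = c * b) : a * c = c * a := by
  have hbmem : b ∈ Subgroup.zpowers a := by
    rw [← centralizer_eq_zpowers hp hq hcard hna ha]
    exact Subgroup.mem_centralizer_iff.mpr (by rintro g rfl; exact hab)
  have hcmem : c ∈ Subgroup.zpowers b := by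
    rw [← centralizer_eq_zpowers hp hq hcard hna hb]
    exact Subgroup.mem_centralizer_iff.mpr (by rintro g rfl; exact hbc)
  have : c ∈ Subgroup.zpowers a := zpowers_le.mpr hbmem hcmem
  obtain ⟨m, rfl⟩ := Subgroup.mem_zpowers_iff.mp this
  obtain ⟨n, rfl⟩ := Subgroup.mem_zpowers_iff.mp hbmem
  exact ((Commute.refl a).zpow_right m).eq


lemma center_ne_bot_of_nilpotent {K : Type*} [Group K] [Group.IsNilpotent K] [Nontrivial K] :
    Subgroup.center K ≠ ⊥ := by
  intro h
  have hall : ∀ n, Subgroup.upperCentralSeries K n = ⊥ := by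
    intro n
    induction n with
    | zero => exact Subgroup.upperCentralSeries_zero K
    | succ n ih =>
      rw [eq_bot_iff]
      intro x hx
      rw [Subgroup.mem_upperCentralSeries_succ_iff] at hx
      have hc : x ∈ center K := Subgroup.mem_center_iff.mpr fun g => by
        have h1 := hx g
        rw [ih, Subgroup.mem_bot, commutatorElement_def, mul_inv_eq_one, mul_inv_eq_iff_eq_mul] at h1
        exact h1.symm
      rw [h, Subgroup.mem_bot] at hc
      simp [hc]
  obtain ⟨n, hn⟩ := Group.IsNilpotent.nilpotent (G := K)
  exact bot_ne_top ((hall n).symm.trans hn)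


lemma isSolvable_aux (G : Type*) [Group G] [Finite G] (p q : ℕ)
    (hp : p.Prime) (hq : q.Prime) (hpq : p ≠ q) (hcard : Nat.card G = p * q)
    (hnd : ¬ q ∣ p - 1) : IsSolvable G := by
  haveI : Fact q.Prime := ⟨hq⟩
  obtain ⟨Q⟩ : Nonempty (Sylow q G) := Sylow.nonempty
  have hfq : (Nat.card G).factorization q = 1 := by
    rw [hcard, Nat.factorization_mul hp.ne_zero hq.ne_zero, hp.factorization,
      hq.factorization]
    simp [Finsupp.single_apply, hpq]
  have hcQ : Nat.card Q = q := by
    rw [Sylow.card_eq_multiplicity, hfq, pow_one]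
  have hiQ : (Q : Subgroup G).index = p := by
    have := Subgroup.card_mul_index (Q : Subgroup G)
    rw [hcard, hcQ] at this
    rw [mul_comm] at this
    exact Nat.eq_of_mul_eq_mul_right hq.pos this
  have hnum : Nat.card (Sylow q G) = 1 := by
    have hdvd : Nat.card (Sylow q G) ∣ p := hiQ ▸ Sylow.card_dvd_index Q
    rcases hp.eq_one_or_self_of_dvd _ hdvd with h | h
    · exact h
    · exfalso
      have hmod := card_sylow_modEq_one q G
      rw [h] at hmod
      have : q ∣ p - 1 := (Nat.modEq_iff_dvd' hp.one_lt.le).mp hmod.symm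
      exact hnd this
  haveI : Subsingleton (Sylow q G) := Nat.card_eq_one_iff_unique.mp hnum |>.1
  have hQn : (Q : Subgroup G).Normal := by
    rw [← Subgroup.normalizer_eq_top_iff, eq_top_iff']
    intro g
    exact Sylow.smul_eq_iff_mem_normalizer.mp (Subsingleton.elim _ _)
  haveI := hQn
  haveI : Group.IsSolvable (Q : Subgroup G) := by
    exact isSolvable_of_comm (comm_of_card_prime hq hcQ)
  haveI : Group.IsSolvable (G ⧸ (Q : Subgroup G)) := by
    haveI : Fact p.Prime := ⟨hp⟩
    have hc : Nat.card (G ⧸ (Q : Subgroup G)) = p :=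
      ((Q : Subgroup G).index_eq_card).symm.trans hiQ
    exact isSolvable_of_comm (comm_of_card_prime hp hc)
  exact solvable_of_ker_le_range (Q : Subgroup G).subtype
    (QuotientGroup.mk' (Q : Subgroup G))
    (by rw [QuotientGroup.ker_mk', Subgroup.range_subtype])


variable {G : Type*} [Group G] [Finite G] {p q : ℕ}

lemma isSolvable_pq (hp : p.Prime) (hq : q.Prime) (hpq : p ≠ q)
    (hcard : Nat.card G = p * q) : IsSolvable G := by
  by_cases hnd : q ∣ p - 1
  · have h1 : q ≤ p - 1 := Nat.le_of_dvd (by have := hp.two_le; omega) hnd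
    have hnd2 : ¬ p ∣ q - 1 := by
      intro h2
      have h3 : p ≤ q - 1 := Nat.le_of_dvd (by have := hq.two_le; omega) h2
      omega
    exact isSolvable_aux G q p hq hp hpq.symm (by rw [mul_comm]; exact hcard) hnd2
  · exact isSolvable_aux G p q hp hq hpq hcard hnd

lemma comm_of_le_zpowers {g : G} {H : Subgroup G} (h : H ≤ Subgroup.zpowers g) :
    ∀ x ∈ H, ∀ y ∈ H, x * y = y * x := by
  intro x hx y hy
  obtain ⟨m, rfl⟩ := Subgroup.mem_zpowers_iff.mp (h hx)
  obtain ⟨n, rfl⟩ := Subgroup.mem_zpowers_iff.mp (h hy)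
  exact ((Commute.refl g).zpow_zpow m n).eq

lemma nilpotent_of_le_zpowers {g : G} {H : Subgroup G} (h : H ≤ Subgroup.zpowers g) :
    Group.IsNilpotent ↥H := by
  letI : CommGroup ↥H :=
    { (inferInstance : Group ↥H) with
      mul_comm := fun x y => Subtype.ext (comm_of_le_zpowers h x.1 x.2 y.1 y.2) }
  infer_instance

lemma closure_pair_le_zpowers (hp : p.Prime) (hq : q.Prime) (hcard : Nat.card G = p * q)
    (hna : ¬ ∀ a b : G, a * b = b * a) {a b : G} (hab : a * b = b * a) :
    ∃ g : G, Subgroup.closure ({a, b} : Set G) ≤ Subgroup.zpowers g := by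
  by_cases ha : a = 1
  · refine ⟨b, (Subgroup.closure_le _).mpr ?_⟩
    rintro x (rfl | rfl)
    · rw [ha]; exact Subgroup.one_mem _
    · exact Subgroup.mem_zpowers _
  · have hbmem : b ∈ Subgroup.zpowers a := by
      rw [← centralizer_eq_zpowers hp hq hcard hna ha]
      exact Subgroup.mem_centralizer_iff.mpr (by rintro g rfl; exact hab)
    refine ⟨a, (Subgroup.closure_le _).mpr ?_⟩
    rintro x (rfl | rfl)
    · exact Subgroup.mem_zpowers _
    · exact hbmem

lemma closure_pair_comm_of_nilpotent (hp : p.Prime) (hq : q.Prime)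
    (hcard : Nat.card G = p * q) (hna : ¬ ∀ a b : G, a * b = b * a) {a b : G}
    (hH : Group.IsNilpotent ↥(Subgroup.closure ({a, b} : Set G))) : a * b = b * a := by
  have ha : a ∈ Subgroup.closure ({a, b} : Set G) :=
    Subgroup.subset_closure (Set.mem_insert _ _)
  have hb : b ∈ Subgroup.closure ({a, b} : Set G) :=
    Subgroup.subset_closure (Set.mem_insert_of_mem _ rfl)
  have hdvd : Nat.card (Subgroup.closure ({a, b} : Set G)) ∣ p * q :=
    hcard ▸ card_subgroup_dvd_card _
  have key : ∀ r : ℕ, r.Prime → Nat.card (Subgroup.closure ({a, b} : Set G)) = r →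
      a * b = b * a := by
    intro r hr hcr
    have := comm_of_card_prime hr hcr ⟨a, ha⟩ ⟨b, hb⟩
    exact Subtype.ext_iff.mp this
  rcases dvd_cases hp hq hdvd with h1 | h1 | h1 | h1
  · have hbot := card_eq_one.mp h1
    rw [hbot, Subgroup.mem_bot] at ha hb
    rw [ha, hb]
  · exact key p hp h1
  · exact key q hq h1
  · exfalso
    have htop : Subgroup.closure ({a, b} : Set G) = ⊤ :=
      eq_top_of_card_eq _ (h1.trans hcard.symm)
    haveI : Group.IsNilpotent G :=
      nilpotent_of_mulEquiv ((MulEquiv.subgroupCongr htop).trans Subgroup.topEquiv)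
    haveI : Nontrivial G := by
      refine Finite.one_lt_card_iff_nontrivial.mp ?_
      rw [hcard]
      exact lt_of_lt_of_le hp.one_lt (Nat.le_mul_of_pos_right p hq.pos)
    exact center_ne_bot_of_nilpotent (center_eq_bot hp hq hcard hna)

end PQAux

section Graphs

open Subgroup PQAux

variable {G : Type*} [Group G] [Finite G] {p q : ℕ}

lemma ncclass_spec (v : NCClass G) :
    ∃ x : G, ConjClasses.mk x = v.1 ∧ x ∉ Subgroup.center G := v.2

lemma adj_def {P : Subgroup G → Prop} {c d : NCClass G} (h : (classGraph G P).Adj c d) :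
    c ≠ d ∧ ∃ a b : G, ConjClasses.mk a = c.1 ∧ ConjClasses.mk b = d.1 ∧
      P (Subgroup.closure {a, b}) := h

lemma adj_mk {P : Subgroup G → Prop} {c d : NCClass G}
    (h : c ≠ d ∧ ∃ a b : G, ConjClasses.mk a = c.1 ∧ ConjClasses.mk b = d.1 ∧
      P (Subgroup.closure {a, b})) : (classGraph G P).Adj c d := h

lemma isCograph_of_trans {V : Type*} (Γ : SimpleGraph V)
    (h : ∀ a b c : V, Γ.Adj a b → Γ.Adj b c → a ≠ c → Γ.Adj a c) : IsCograph Γ := by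
  rintro ⟨a, b, c, d, hab', hac', had', hbc', hbd', hcd', hab, hbc, hcd, hnac, hnad, hnbd⟩
  exact hnac (h a b c hab hbc hac')

lemma class_ne_one (hp : p.Prime) (hq : q.Prime) (hcard : Nat.card G = p * q)
    (hna : ¬ ∀ a b : G, a * b = b * a) (v : NCClass G) {x : G}
    (hx : ConjClasses.mk x = v.1) : x ≠ 1 := by
  rintro rfl
  obtain ⟨y, hy, hyn⟩ := ncclass_spec v
  have hcj : IsConj (1 : G) y := ConjClasses.mk_eq_mk_iff_isConj.mp (hx.trans hy.symm)
  obtain ⟨g, hg⟩ := isConj_iff.mp hcj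
  simp only [mul_one] at hg
  rw [mul_inv_cancel] at hg
  exact hyn (hg ▸ Subgroup.one_mem _)

lemma adj_trans (hp : p.Prime) (hq : q.Prime) (hcard : Nat.card G = p * q)
    (hna : ¬ ∀ a b : G, a * b = b * a) (P : Subgroup G → Prop)
    (hPcomm : ∀ a b : G, P (Subgroup.closure {a, b}) → a * b = b * a)
    (hPof : ∀ a b : G, a * b = b * a → P (Subgroup.closure {a, b})) :
    ∀ c d e : NCClass G, (classGraph G P).Adj c d → (classGraph G P).Adj d e →
      c ≠ e → (classGraph G P).Adj c e := by
  intro c d e hcd hde hce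
  obtain ⟨-, a, b, hac, hbd, hPab⟩ := adj_def hcd
  obtain ⟨-, b', c', hb'd, hc'e, hPbc⟩ := adj_def hde
  have hCab : a * b = b * a := hPcomm a b hPab
  have hCbc : b' * c' = c' * b' := hPcomm b' c' hPbc
  obtain ⟨g, hg⟩ := isConj_iff.mp
    (ConjClasses.mk_eq_mk_iff_isConj.mp (hbd.trans hb'd.symm))
  have hCa'b' : (g * a * g⁻¹) * b' = b' * (g * a * g⁻¹) := by
    rw [← hg]
    have e1 : (g * a * g⁻¹) * (g * b * g⁻¹) = g * (a * b) * g⁻¹ := by group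
    have e2 : (g * b * g⁻¹) * (g * a * g⁻¹) = g * (b * a) * g⁻¹ := by group
    rw [e1, e2, hCab]
  have hmka' : ConjClasses.mk (g * a * g⁻¹) = c.1 := by
    rw [← hac]
    exact ConjClasses.mk_eq_mk_iff_isConj.mpr (isConj_iff.mpr ⟨g, rfl⟩).symm
  have ha'1 : g * a * g⁻¹ ≠ 1 := class_ne_one hp hq hcard hna c hmka'
  have hb'1 : b' ≠ 1 := class_ne_one hp hq hcard hna d hb'd
  have hCa'c' : (g * a * g⁻¹) * c' = c' * (g * a * g⁻¹) :=
    commute_trans hp hq hcard hna ha'1 hb'1 hCa'b' hCbc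
  exact adj_mk ⟨hce, g * a * g⁻¹, c', hmka', hc'e, hPof _ _ hCa'c'⟩

end Graphs

theorem pq_group_cograph (G : Type*) [Group G] [Finite G] (p q : ℕ)
    (hp : p.Prime) (hq : q.Prime) (hpq : p ≠ q) (hcard : Nat.card G = p * q) :
    IsCograph (cccGraph G) ∧ IsCograph (nccGraph G) ∧ IsCograph (sccGraph G) := by
  haveI : Group.IsSolvable G := PQAux.isSolvable_pq hp hq hpq hcard
  have hscc : IsCograph (sccGraph G) := by
    apply isCograph_of_trans
    intro a b c _ _ hac
    obtain ⟨x, hx, -⟩ := ncclass_spec a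
    obtain ⟨y, hy, -⟩ := ncclass_spec c
    exact adj_mk ⟨hac, x, y, hx, hy, (inferInstance : Group.IsSolvable _)⟩
  by_cases hna : ∀ a b : G, a * b = b * a
  · have hempty : IsEmpty (NCClass G) := ⟨fun v => by
      obtain ⟨x, -, hx⟩ := ncclass_spec v
      exact hx (Subgroup.mem_center_iff.mpr fun g => hna g x)⟩
    refine ⟨?_, ?_, hscc⟩ <;> rintro ⟨v, -⟩ <;> exact hempty.false v
  · refine ⟨?_, ?_, hscc⟩
    · refine isCograph_of_trans _ (adj_trans hp hq hcard hna _ ?_ ?_)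
      · intro a b h
        exact h a (Subgroup.subset_closure (Set.mem_insert _ _))
          b (Subgroup.subset_closure (Set.mem_insert_of_mem _ rfl))
      · intro a b hab
        obtain ⟨g, hle⟩ := PQAux.closure_pair_le_zpowers hp hq hcard hna hab
        exact PQAux.comm_of_le_zpowers hle
    · refine isCograph_of_trans _ (adj_trans hp hq hcard hna _ ?_ ?_)
      · intro a b h
        exact PQAux.closure_pair_comm_of_nilpotent hp hq hcard hna h
      · intro a b hab
        obtain ⟨g, hle⟩ := PQAux.closure_pair_le_zpowers hp hq hcard hna hab
        exact PQAux.nilpotent_of_le_zpowers hle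
end

section
/- Let G be a finite group of order pq, where p and q are distinct primes. Then Γ_CCC(G), Γ_NCC(G) and Γ_SCC(G) are all chordal graphs. -/
open Subgroup Pointwise

section GroupAux
variable {G : Type*} [Group G] [Finite G]

lemma dvd_pq {p q d : ℕ} (hp : p.Prime) (hq : q.Prime) (hpq : p ≠ q) (hd : d ∣ p * q) :
    d = 1 ∨ d = p ∨ d = q ∨ d = p * q := by
  by_cases h1 : p ∣ d
  · by_cases h2 : q ∣ d
    · exact Or.inr <| Or.inr <| Or.inr <| Nat.dvd_antisymm hd
        (Nat.Coprime.mul_dvd_of_dvd_of_dvd ((Nat.coprime_primes hp hq).mpr hpq) h1 h2)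
    · obtain ⟨e, rfl⟩ := h1
      have he : e ∣ q := (mul_dvd_mul_iff_left hp.pos.ne').mp hd
      rcases hq.eq_one_or_self_of_dvd e he with h | h
      · exact Or.inr <| Or.inl (by rw [h, mul_one])
      · exact absurd (by rw [h]; exact dvd_mul_left q p) h2
  · have hco : Nat.Coprime d p := Nat.coprime_comm.mp ((Nat.Prime.coprime_iff_not_dvd hp).mpr h1)
    have hdq : d ∣ q := hco.dvd_of_dvd_mul_left hd
    rcases hq.eq_one_or_self_of_dvd d hdq with rfl | rfl
    · exact Or.inl rfl
    · exact Or.inr <| Or.inr <| Or.inl rfl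

lemma big_order_false (hnc : ∃ x : G, x ∉ Subgroup.center G) {g : G}
    (h : orderOf g = Nat.card G) : False := by
  obtain ⟨x, hx⟩ := hnc
  apply hx
  have htop : Subgroup.zpowers g = ⊤ :=
    Subgroup.eq_top_of_card_eq _ (by rw [Nat.card_zpowers, h])
  rw [Subgroup.mem_center_iff]
  intro y
  obtain ⟨m, hm⟩ := Subgroup.mem_zpowers_iff.mp (by rw [htop]; exact Subgroup.mem_top x)
  obtain ⟨k, hk⟩ := Subgroup.mem_zpowers_iff.mp (by rw [htop]; exact Subgroup.mem_top y)
  subst hm; subst hk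
  rw [← zpow_add, ← zpow_add, add_comm]

lemma order_mem {p q : ℕ} (hp : p.Prime) (hq : q.Prime) (hpq : p ≠ q)
    (hcard : Nat.card G = p * q) (hnc : ∃ x : G, x ∉ Subgroup.center G)
    {g : G} (hg : g ∉ Subgroup.center G) : orderOf g = p ∨ orderOf g = q := by
  have hd : orderOf g ∣ p * q := hcard ▸ orderOf_dvd_natCard g
  rcases dvd_pq hp hq hpq hd with h | h | h | h
  · exact absurd (orderOf_eq_one_iff.mp h ▸ Subgroup.one_mem _) hg
  · exact Or.inl h
  · exact Or.inr h
  · exact absurd (h.trans hcard.symm) fun hh => big_order_false ⟨g, hg⟩ hh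

lemma center_eq_bot {p q : ℕ} (hp : p.Prime) (hq : q.Prime) (hpq : p ≠ q)
    (hcard : Nat.card G = p * q) (hnc : ∃ x : G, x ∉ Subgroup.center G) :
    Subgroup.center G = ⊥ := by
  obtain ⟨x, hx⟩ := hnc
  have hnt : Subgroup.center G ≠ ⊤ := fun h => hx (h ▸ Subgroup.mem_top x)
  have hd : Nat.card (Subgroup.center G) ∣ p * q := hcard ▸ Subgroup.card_subgroup_dvd_card _
  have key : ∀ r s : ℕ, r.Prime → s.Prime → Nat.card G = r * s →
      Nat.card (Subgroup.center G) = r → Subgroup.center G = ⊤ := by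
    intro r s hr hs hc hcc
    have hq' : Nat.card (G ⧸ Subgroup.center G) = s := by
      have h2 := Subgroup.card_eq_card_quotient_mul_card_subgroup (Subgroup.center G)
      rw [hc, hcc] at h2
      have := Nat.eq_of_mul_eq_mul_right hr.pos (by rw [← h2, mul_comm] :
        Nat.card (G ⧸ Subgroup.center G) * r = s * r)
      exact this
    haveI : Fact s.Prime := ⟨hs⟩
    haveI : IsCyclic (G ⧸ Subgroup.center G) := isCyclic_of_prime_card hq'
    have hcomm := commutative_of_cyclic_center_quotient
      (QuotientGroup.mk' (Subgroup.center G)) (le_of_eq (QuotientGroup.ker_mk' _))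
    exact (Subgroup.eq_top_iff' (Subgroup.center G)).mpr fun z => Subgroup.mem_center_iff.mpr fun g => hcomm g z
  rcases dvd_pq hp hq hpq hd with h | h | h | h
  · exact Subgroup.card_eq_one.mp h
  · exact absurd (key p q hp hq hcard h) hnt
  · exact absurd (key q p hq hp (by rw [hcard, mul_comm]) h) hnt
  · exact absurd (Subgroup.eq_top_of_card_eq _ (by rw [h, hcard])) hnt

lemma false_of_nilpotent (hnc : ∃ x : G, x ∉ Subgroup.center G)
    (hZ : Subgroup.center G = ⊥) (hnil : Group.IsNilpotent G) : False := by
  obtain ⟨x, hx⟩ := hnc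
  obtain ⟨n, hn⟩ := hnil.nilpotent
  have key : ∀ m, Subgroup.upperCentralSeries G m = ⊥ := by
    intro m
    induction m with
    | zero => exact Subgroup.upperCentralSeries_zero G
    | succ m ih =>
      apply le_antisymm _ bot_le
      intro z hz
      rw [Subgroup.mem_upperCentralSeries_succ_iff] at hz
      rw [← hZ, Subgroup.mem_center_iff]
      intro g
      have h1 := hz g
      rw [ih, Subgroup.mem_bot] at h1
      exact (commutatorElement_eq_one_iff_mul_comm.mp h1).symm
  rw [key n] at hn
  have : x ∈ (⊥ : Subgroup G) := by rw [hn]; exact Subgroup.mem_top x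
  exact hx (Subgroup.mem_bot.mp this ▸ Subgroup.one_mem _)

lemma mixed_nilpotent {p q : ℕ} (hp : p.Prime) (hq : q.Prime) (hpq : p ≠ q)
    (hcard : Nat.card G = p * q) (hnc : ∃ x : G, x ∉ Subgroup.center G)
    {H : Subgroup G} (hnil : Group.IsNilpotent H)
    {x y : G} (hxm : x ∈ H) (hym : y ∈ H) (hx : orderOf x = p) (hy : orderOf y = q) : False := by
  have hdp : p ∣ Nat.card H := hx ▸ Subgroup.orderOf_dvd_natCard H hxm
  have hdq : q ∣ Nat.card H := hy ▸ Subgroup.orderOf_dvd_natCard H hym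
  have h1 : p * q ∣ Nat.card H :=
    Nat.Coprime.mul_dvd_of_dvd_of_dvd ((Nat.coprime_primes hp hq).mpr hpq) hdp hdq
  have h2 : Nat.card H ∣ p * q := hcard ▸ Subgroup.card_subgroup_dvd_card H
  have hT : H = ⊤ := Subgroup.eq_top_of_card_eq H (by rw [hcard]; exact Nat.dvd_antisymm h2 h1)
  subst hT
  haveI := hnil
  have : Group.IsNilpotent G :=
    nilpotent_of_surjective Subgroup.topEquiv.toMonoidHom (by rw [MulEquiv.coe_toMonoidHom]; exact Subgroup.topEquiv.surjective)
  exact false_of_nilpotent hnc (center_eq_bot hp hq hpq hcard hnc) this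

lemma order_eq_core {p q : ℕ} (hp : p.Prime) (hq : q.Prime) (hpq : p ≠ q)
    (hcard : Nat.card G = p * q) (hnc : ∃ x : G, x ∉ Subgroup.center G)
    {a b : G} (ha : a ∉ Subgroup.center G) (hb : b ∉ Subgroup.center G)
    (hnil : Group.IsNilpotent (Subgroup.closure ({a, b} : Set G))) :
    orderOf a = orderOf b := by
  have haH : a ∈ Subgroup.closure ({a, b} : Set G) :=
    Subgroup.subset_closure (Set.mem_insert _ _)
  have hbH : b ∈ Subgroup.closure ({a, b} : Set G) :=
    Subgroup.subset_closure (Set.mem_insert_of_mem _ rfl)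
  rcases order_mem hp hq hpq hcard hnc ha with h1 | h1 <;>
    rcases order_mem hp hq hpq hcard hnc hb with h2 | h2
  · rw [h1, h2]
  · exact absurd (mixed_nilpotent hp hq hpq hcard hnc hnil haH hbH h1 h2) id
  · exact absurd (mixed_nilpotent hp hq hpq hcard hnc hnil hbH haH h2 h1) id
  · rw [h1, h2]

lemma exists_conj_mem_zpowers {r : ℕ} (hr : r.Prime)
    (hfac : (Nat.card G).factorization r = 1) {a b : G}
    (ha : orderOf a = r) (hb : orderOf b = r) :
    ∃ g : G, g * b * g⁻¹ ∈ Subgroup.zpowers a := by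
  haveI : Fact r.Prime := ⟨hr⟩
  have hA : IsPGroup r (Subgroup.zpowers a) :=
    IsPGroup.of_card (by rw [Nat.card_zpowers, ha, pow_one])
  have hB : IsPGroup r (Subgroup.zpowers b) :=
    IsPGroup.of_card (by rw [Nat.card_zpowers, hb, pow_one])
  obtain ⟨P, hP⟩ := hA.exists_le_sylow
  obtain ⟨Q, hQ⟩ := hB.exists_le_sylow
  have hcardP : Nat.card P = r := by rw [P.card_eq_multiplicity, hfac, pow_one]
  have hPa : Subgroup.zpowers a = ↑P :=
    Subgroup.eq_of_le_of_card_ge hP (by rw [hcardP, Nat.card_zpowers, ha])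
  obtain ⟨g, hg⟩ := MulAction.exists_smul_eq G Q P
  refine ⟨g, ?_⟩
  rw [hPa]
  have hmem : MulAut.conj g • b ∈ MulAut.conj g • (Q : Subgroup G) :=
    Subgroup.smul_mem_pointwise_smul _ _ _ (hQ (Subgroup.mem_zpowers b))
  rw [← Sylow.coe_subgroup_smul, hg] at hmem
  simpa [MulAut.conj_apply] using hmem

lemma solvable_of_card_prime {H : Type*} [Group H] {r : ℕ} (hr : r.Prime)
    (h : Nat.card H = r) : IsSolvable H := by
  haveI : Fact r.Prime := ⟨hr⟩
  haveI := isCyclic_of_prime_card h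
  letI : CommGroup H := IsCyclic.commGroup
  exact (inferInstance : Group.IsSolvable H)

lemma factorization_pq {p q : ℕ} (hp : p.Prime) (hq : q.Prime) (hpq : p ≠ q) :
    (p * q).factorization p = 1 := by
  rw [Nat.factorization_mul hp.pos.ne' hq.pos.ne', Finsupp.add_apply,
    hp.factorization, hq.factorization, Finsupp.single_apply, Finsupp.single_apply]
  simp [hpq.symm]

lemma solvable_aux {p q : ℕ} (hp : p.Prime) (hq : q.Prime) (hlt : p < q)
    (hcard : Nat.card G = p * q) : IsSolvable G := by
  haveI : Fact q.Prime := ⟨hq⟩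
  have hpq : p ≠ q := Nat.ne_of_lt hlt
  obtain ⟨Q⟩ := (inferInstance : Nonempty (Sylow q G))
  have hcardQ : Nat.card Q = q := by
    rw [Q.card_eq_multiplicity, hcard, mul_comm, factorization_pq hq hp hpq.symm, pow_one]
  have hidx : (Q : Subgroup G).index = p := by
    have h2 := Subgroup.card_mul_index (Q : Subgroup G)
    rw [hcardQ, hcard] at h2
    exact Nat.eq_of_mul_eq_mul_left hq.pos (by rw [h2, mul_comm p q])
  have hnum : Nat.card (Sylow q G) = 1 := by
    have h1 : Nat.card (Sylow q G) ∣ p := hidx ▸ Sylow.card_dvd_index Q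
    rcases hp.eq_one_or_self_of_dvd _ h1 with h | h
    · exact h
    · exfalso
      have h2 : Nat.card (Sylow q G) ≡ 1 [MOD q] := card_sylow_modEq_one q G
      rw [h, Nat.ModEq, Nat.mod_eq_of_lt hlt, Nat.mod_eq_of_lt hq.one_lt] at h2
      exact hp.one_lt.ne' h2
  haveI : Subsingleton (Sylow q G) := (Nat.card_eq_one_iff_unique.mp hnum).1
  haveI hnorm : (Q : Subgroup G).Normal := by
    rw [← Subgroup.normalizer_eq_top_iff]
    rw [Subgroup.eq_top_iff']
    intro g
    refine Sylow.smul_eq_iff_mem_normalizer.mp ?_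
    exact Subsingleton.elim _ _
  haveI : Group.IsSolvable (Q : Subgroup G) := solvable_of_card_prime hq hcardQ
  haveI : Group.IsSolvable (G ⧸ (Q : Subgroup G)) :=
    solvable_of_card_prime hp (by rw [← Subgroup.index_eq_card, hidx])
  exact solvable_of_ker_le_range (Q : Subgroup G).subtype (QuotientGroup.mk' (Q : Subgroup G))
    (by rw [QuotientGroup.ker_mk', Subgroup.range_subtype])

end GroupAux


lemma classGraph_adj {G : Type*} [Group G] {P : Subgroup G → Prop} {c d : NCClass G} :
    (classGraph G P).Adj c d ↔ (c ≠ d ∧ ∃ a b : G, ConjClasses.mk a = c.1 ∧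
      ConjClasses.mk b = d.1 ∧ P (Subgroup.closure {a, b})) := Iff.rfl

lemma chordal_of_trans {V : Type*} {Γ : SimpleGraph V}
    (h : ∀ a b c : V, Γ.Adj a b → Γ.Adj b c → a ≠ c → Γ.Adj a c) : IsChordal Γ := by
  rintro n hn ⟨f, hinj, hadj⟩
  have cast_ne : ∀ a b : ℕ, a < n → b < n → ((a : ZMod n) = (b : ZMod n)) → a = b := by
    intro a b han hbn heq
    rwa [ZMod.natCast_eq_natCast_iff, Nat.ModEq, Nat.mod_eq_of_lt han,
      Nat.mod_eq_of_lt hbn] at heq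
  have a01 : Γ.Adj (f 0) (f 1) := (hadj 0 1).mpr (Or.inl (zero_add 1).symm)
  have a12 : Γ.Adj (f 1) (f 2) := (hadj 1 2).mpr (Or.inl one_add_one_eq_two.symm)
  have h02 : f 0 ≠ f 2 := by
    intro hf
    have h1 : ((0 : ℕ) : ZMod n) = ((2 : ℕ) : ZMod n) := by push_cast; exact hinj hf
    have := cast_ne 0 2 (by omega) (by omega) h1
    omega
  have a02 := h _ _ _ a01 a12 h02
  rcases (hadj 0 2).mp a02 with h' | h'
  · have h1 : ((2 : ℕ) : ZMod n) = ((1 : ℕ) : ZMod n) := by push_cast; rw [h', zero_add]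
    have := cast_ne 2 1 (by omega) (by omega) h1
    omega
  · have h1 : ((0 : ℕ) : ZMod n) = ((3 : ℕ) : ZMod n) := by push_cast; rw [h']; norm_num
    have := cast_ne 0 3 (by omega) (by omega) h1
    omega

section Main
variable {G : Type*} [Group G] [Finite G]

lemma mk_eq_transfer {x y : G} (h : ConjClasses.mk x = ConjClasses.mk y) :
    orderOf x = orderOf y ∧ (x ∉ Subgroup.center G → y ∉ Subgroup.center G) := by
  obtain ⟨g, hg⟩ := isConj_iff.mp (ConjClasses.mk_eq_mk_iff_isConj.mp h)
  constructor
  · have h2 := orderOf_injective (MulAut.conj g).toMonoidHom (MulAut.conj g).injective x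
    rw [← hg]
    simpa [MulAut.conj_apply] using h2.symm
  · intro hx hy
    apply hx
    have : x = g⁻¹ * y * g := by rw [← hg]; group
    rw [this]
    simpa using Subgroup.Normal.conj_mem (inferInstance : (Subgroup.center G).Normal) y hy g⁻¹

/-- transitivity for `ccc`/`ncc` style graphs -/
lemma trans_of_nil {p q : ℕ} (hp : p.Prime) (hq : q.Prime) (hpq : p ≠ q)
    (hcard : Nat.card G = p * q) {P : Subgroup G → Prop}
    (hPnil : ∀ H : Subgroup G, P H → Group.IsNilpotent H)
    (hPcomm : ∀ H : Subgroup G, (∀ x ∈ H, ∀ y ∈ H, x * y = y * x) → P H) :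
    ∀ c1 c2 c3, (classGraph G P).Adj c1 c2 → (classGraph G P).Adj c2 c3 →
      c1 ≠ c3 → (classGraph G P).Adj c1 c3 := by
  intro c1 c2 c3 h12 h23 hne
  rw [classGraph_adj] at h12 h23 ⊢
  obtain ⟨-, a, b, hma, hmb, hPab⟩ := h12
  obtain ⟨-, b', c, hmb', hmc, hPbc⟩ := h23
  obtain ⟨x1, hx1m, hx1⟩ := c1.2
  obtain ⟨x2, hx2m, hx2⟩ := c2.2
  obtain ⟨x3, hx3m, hx3⟩ := c3.2
  have hnc : ∃ x : G, x ∉ Subgroup.center G := ⟨x1, hx1⟩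
  have ta := mk_eq_transfer (hx1m.trans hma.symm)
  have tb := mk_eq_transfer (hx2m.trans hmb.symm)
  have tb' := mk_eq_transfer (hx2m.trans hmb'.symm)
  have tc := mk_eq_transfer (hx3m.trans hmc.symm)
  have hNa : a ∉ Subgroup.center G := ta.2 hx1
  have hNb : b ∉ Subgroup.center G := tb.2 hx2
  have hNb' : b' ∉ Subgroup.center G := tb'.2 hx2
  have hNc : c ∉ Subgroup.center G := tc.2 hx3
  have e1 : orderOf a = orderOf b :=
    order_eq_core hp hq hpq hcard hnc hNa hNb (hPnil _ hPab)
  have e2 : orderOf b' = orderOf c :=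
    order_eq_core hp hq hpq hcard hnc hNb' hNc (hPnil _ hPbc)
  have eac : orderOf a = orderOf c := by
    rw [e1, ← tb.1, tb'.1, e2]
  have hfac : ∃ r : ℕ, r.Prime ∧ (Nat.card G).factorization r = 1 ∧ orderOf a = r := by
    rcases order_mem hp hq hpq hcard hnc hNa with h | h
    · exact ⟨p, hp, by rw [hcard]; exact factorization_pq hp hq hpq, h⟩
    · exact ⟨q, hq, by rw [hcard, mul_comm]; exact factorization_pq hq hp hpq.symm, h⟩
  obtain ⟨r, hr, hfac, har⟩ := hfac
  obtain ⟨g, hg⟩ := exists_conj_mem_zpowers hr hfac har (eac ▸ har)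
  refine ⟨hne, a, g * c * g⁻¹, hma, ?_, ?_⟩
  · rw [← hmc]
    exact (ConjClasses.mk_eq_mk_iff_isConj.mpr (isConj_iff.mpr ⟨g, rfl⟩)).symm
  · apply hPcomm
    have hle : Subgroup.closure ({a, g * c * g⁻¹} : Set G) ≤ Subgroup.zpowers a :=
      (Subgroup.closure_le _).mpr
        (Set.insert_subset_iff.mpr ⟨Subgroup.mem_zpowers a, Set.singleton_subset_iff.mpr hg⟩)
    intro x hx y hy
    obtain ⟨m, hm⟩ := Subgroup.mem_zpowers_iff.mp (hle hx)
    obtain ⟨k, hk⟩ := Subgroup.mem_zpowers_iff.mp (hle hy)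
    rw [← hm, ← hk, ← zpow_add, ← zpow_add, add_comm]

end Main

theorem pq_group_chordal (G : Type*) [Group G] [Finite G] (p q : ℕ)
    (hp : p.Prime) (hq : q.Prime) (hpq : p ≠ q) (hcard : Nat.card G = p * q) :
    IsChordal (cccGraph G) ∧ IsChordal (nccGraph G) ∧ IsChordal (sccGraph G) := by
  have hsolv : IsSolvable G := by
    rcases lt_or_gt_of_ne hpq with h | h
    · exact solvable_aux hp hq h hcard
    · exact solvable_aux hq hp h (by rw [hcard, mul_comm])
  refine ⟨chordal_of_trans ?_, chordal_of_trans ?_, chordal_of_trans ?_⟩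
  · apply trans_of_nil hp hq hpq hcard
    · intro H h
      letI : CommGroup H :=
        { (inferInstance : Group H) with
          mul_comm := fun x y => Subtype.ext (h x.1 x.2 y.1 y.2) }
      infer_instance
    · exact fun H h => h
  · apply trans_of_nil hp hq hpq hcard
    · exact fun H h => h
    · intro H h
      letI : CommGroup H :=
        { (inferInstance : Group H) with
          mul_comm := fun x y => Subtype.ext (h x.1 x.2 y.1 y.2) }
      infer_instance
  · intro c1 c2 c3 _ _ hne
    show (classGraph G (fun H => IsSolvable H)).Adj c1 c3
    rw [classGraph_adj]
    obtain ⟨x1, hx1m, hx1⟩ := c1.2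
    obtain ⟨x3, hx3m, hx3⟩ := c3.2
    exact ⟨hne, x1, x3, hx1m, hx3m, by haveI : Group.IsSolvable G := hsolv; exact (inferInstance : Group.IsSolvable (Subgroup.closure ({x1, x3} : Set G)))⟩
end

section
/- Let G be a finite nilpotent group whose order is divisible by at least two distinct primes. Then Γ_CCC(G) is 2K_2-free if and only if G is abelian. -/
section Aux

variable {G : Type*} [Group G]

open scoped commutatorElement

private lemma closure_pair_comm {a b : G} (h : a * b = b * a) :
    ∀ x ∈ Subgroup.closure ({a, b} : Set G), ∀ y ∈ Subgroup.closure ({a, b} : Set G),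
      x * y = y * x := by
  intro x hx y hy
  refine Subgroup.closure_induction₂ (p := fun x y _ _ => Commute x y) ?_ ?_ ?_ ?_ ?_ ?_ ?_ hx hy
  · rintro u v (rfl | rfl) (rfl | rfl)
    · exact Commute.refl _
    · exact h
    · exact h.symm
    · exact Commute.refl _
  · exact fun x _ => Commute.one_left x
  · exact fun x _ => Commute.one_right x
  · exact fun _ _ _ _ _ _ h1 h2 => h1.mul_left h2
  · exact fun _ _ _ _ _ _ h1 h2 => h1.mul_right h2
  · exact fun _ _ _ _ h1 => h1.inv_left
  · exact fun _ _ _ _ h1 => h1.inv_right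

private lemma exists_split (x : G) {m n : ℕ} (hm : 0 < m) (hn : 0 < n)
    (hco : Nat.Coprime m n) (hx : orderOf x ∣ m * n) :
    ∃ u v : G, x = u * v ∧ u * v = v * u ∧ orderOf u ∣ m ∧ orderOf v ∣ n := by
  have hmn : 0 < m * n := Nat.mul_pos hm hn
  obtain ⟨c, hcm, hcn, hclt⟩ : ∃ c : ℕ, c % m = 1 % m ∧ n ∣ c ∧ c < m * n := by
    obtain ⟨c0, hc1, hc2⟩ := Nat.chineseRemainder hco 1 0
    refine ⟨c0 % (m * n), ?_, ?_, Nat.mod_lt _ hmn⟩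
    · exact ((Nat.mod_modEq c0 (m * n)).of_dvd (dvd_mul_right m n)).trans hc1
    · exact (Nat.modEq_zero_iff_dvd).mp
        (((Nat.mod_modEq c0 (m * n)).of_dvd (dvd_mul_left n m)).trans hc2)
  have hmj : m ∣ m * n + 1 - c := by
    rcases eq_or_ne m 1 with rfl | hm1
    · exact one_dvd _
    · have hm2 : 2 ≤ m := by omega
      have h1m : c % m = 1 := by rw [hcm]; exact Nat.mod_eq_of_lt (by omega)
      obtain ⟨sdiv, hsdiv⟩ : ∃ sdiv : ℕ, c = m * sdiv + 1 := by
        refine ⟨c / m, ?_⟩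
        conv_lhs => rw [← Nat.div_add_mod c m]
        rw [h1m]
      have hj2 : m * n + 1 - c = m * n - m * sdiv := by
        rw [hsdiv]
        exact Nat.add_sub_add_right (m * n) 1 (m * sdiv)
      rw [hj2]
      exact Nat.dvd_sub (dvd_mul_right m n) (dvd_mul_right m _)
  refine ⟨x ^ c, x ^ (m * n + 1 - c), ?_, ?_, ?_, ?_⟩
  · rw [← pow_add]
    have hcj : c + (m * n + 1 - c) = m * n + 1 :=
      Nat.add_sub_cancel' (Nat.le_succ_of_le (le_of_lt hclt))
    rw [hcj, pow_succ, orderOf_dvd_iff_pow_eq_one.mp hx, one_mul]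
  · exact Commute.pow_pow_self x c _
  · rw [orderOf_dvd_iff_pow_eq_one, ← pow_mul]
    apply orderOf_dvd_iff_pow_eq_one.mp
    obtain ⟨t, ht⟩ := hcn
    exact hx.trans ⟨t, by rw [ht]; ring⟩
  · rw [orderOf_dvd_iff_pow_eq_one, ← pow_mul]
    apply orderOf_dvd_iff_pow_eq_one.mp
    obtain ⟨t, ht⟩ := hmj
    exact hx.trans ⟨t, by rw [ht]; ring⟩

private lemma orderOf_conj' (g x : G) : orderOf (g * x * g⁻¹) = orderOf x := by
  have h : ∀ a y : G, orderOf (a * y * a⁻¹) ∣ orderOf y := by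
    intro a y
    rw [orderOf_dvd_iff_pow_eq_one, conj_pow, pow_orderOf_eq_one]
    simp
  refine dvd_antisymm (h g x) ?_
  have h2 := h g⁻¹ (g * x * g⁻¹)
  have e : g⁻¹ * (g * x * g⁻¹) * g⁻¹⁻¹ = x := by group
  rwa [e] at h2

private lemma commute_of_prime_pow [Finite G] (hnil : Group.IsNilpotent G)
    {p q : ℕ} (hp : p.Prime) (hq : q.Prime) (hpq : p ≠ q) {k l : ℕ} {x y : G}
    (hx : orderOf x = p ^ k) (hy : orderOf y = q ^ l) : x * y = y * x := by
  haveI := Fact.mk hp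
  haveI := Fact.mk hq
  have hnorm := ((isNilpotent_of_finite_tfae (G := G)).out 0 3).mp hnil
  have hxP : IsPGroup p (Subgroup.zpowers x) :=
    IsPGroup.of_card (by rw [Nat.card_zpowers, hx])
  obtain ⟨P, hP⟩ := hxP.exists_le_sylow
  have hyQ : IsPGroup q (Subgroup.zpowers y) :=
    IsPGroup.of_card (by rw [Nat.card_zpowers, hy])
  obtain ⟨Q, hQ⟩ := hyQ.exists_le_sylow
  have hPn : (P : Subgroup G).Normal := hnorm p (Fact.mk hp) P
  have hQn : (Q : Subgroup G).Normal := hnorm q (Fact.mk hq) Q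
  have hxp : x ∈ (P : Subgroup G) := hP (Subgroup.mem_zpowers x)
  have hyq : y ∈ (Q : Subgroup G) := hQ (Subgroup.mem_zpowers y)
  have hcP : ⁅x, y⁆ ∈ (P : Subgroup G) := by
    have h1 : y * x⁻¹ * y⁻¹ ∈ (P : Subgroup G) := hPn.conj_mem _ (inv_mem hxp) y
    have e : ⁅x, y⁆ = x * (y * x⁻¹ * y⁻¹) := by
      rw [commutatorElement_def]; group
    rw [e]; exact mul_mem hxp h1
  have hcQ : ⁅x, y⁆ ∈ (Q : Subgroup G) := by
    have h1 : x * y * x⁻¹ ∈ (Q : Subgroup G) := hQn.conj_mem _ hyq x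
    have e : ⁅x, y⁆ = x * y * x⁻¹ * y⁻¹ := commutatorElement_def x y
    rw [e]; exact mul_mem h1 (inv_mem hyq)
  obtain ⟨i, hi⟩ := P.isPGroup' ⟨_, hcP⟩
  obtain ⟨j, hj⟩ := Q.isPGroup' ⟨_, hcQ⟩
  have hi' : ⁅x, y⁆ ^ p ^ i = 1 := by
    have := congrArg (fun w : (P : Subgroup G) => (w : G)) hi
    simpa using this
  have hj' : ⁅x, y⁆ ^ q ^ j = 1 := by
    have := congrArg (fun w : (Q : Subgroup G) => (w : G)) hj
    simpa using this
  have hd1 : orderOf ⁅x, y⁆ ∣ p ^ i := orderOf_dvd_iff_pow_eq_one.mpr hi'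
  have hd2 : orderOf ⁅x, y⁆ ∣ q ^ j := orderOf_dvd_iff_pow_eq_one.mpr hj'
  have hco : Nat.Coprime (p ^ i) (q ^ j) :=
    Nat.Coprime.pow _ _ ((Nat.coprime_primes hp hq).mpr hpq)
  have h1 : orderOf ⁅x, y⁆ = 1 := Nat.dvd_one.mp (hco ▸ Nat.dvd_gcd hd1 hd2)
  exact commutatorElement_eq_one_iff_commute.mp (orderOf_eq_one_iff.mp h1)

private lemma mem_of_primePow [Finite G] (H : Subgroup G) (d : ℕ)
    (hH : ∀ y : G, IsPrimePow (orderOf y) → orderOf y ∣ d → y ∈ H) :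
    ∀ x : G, orderOf x ∣ d → x ∈ H := by
  suffices h : ∀ n : ℕ, ∀ x : G, orderOf x = n → orderOf x ∣ d → x ∈ H from
    fun x hx => h _ x rfl hx
  intro n
  induction n using Nat.strong_induction_on with
  | _ n ih =>
    intro x hxn hxd
    rcases eq_or_ne n 1 with rfl | hn1
    · have hx1 : x = 1 := orderOf_eq_one_iff.mp hxn
      rw [hx1]; exact one_mem H
    have hn0 : 0 < n := hxn ▸ orderOf_pos x
    set p := n.minFac with hpdef
    have hp : p.Prime := Nat.minFac_prime hn1
    set e := n.factorization p with hedef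
    set m := n / p ^ e with hmdef
    have hsplit : p ^ e * m = n := Nat.ordProj_mul_ordCompl_eq_self n p
    have hem : 0 < e := hp.factorization_pos_of_dvd (by omega) (Nat.minFac_dvd n)
    have hcopm : Nat.Coprime p m := Nat.coprime_ordCompl hp (by omega)
    have hco : Nat.Coprime (p ^ e) m := Nat.Coprime.pow_left _ hcopm
    have hpe1 : 1 < p ^ e := Nat.one_lt_pow (by omega) hp.one_lt
    rcases eq_or_ne m 1 with hm1 | hm1
    · refine hH x ?_ hxd
      rw [hxn, ← hsplit, hm1, mul_one]
      exact ⟨p, e, hp.prime, hem, rfl⟩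
    · have hm0 : 0 < m := by
        rcases Nat.eq_zero_or_pos m with h0 | h0
        · rw [h0, mul_zero] at hsplit; omega
        · exact h0
      obtain ⟨u, v, huv, _, hu, hv⟩ :=
        exists_split x (by positivity) hm0 hco (by rw [hsplit, hxn])
      have hpen : p ^ e < n := by
        have : p ^ e * 2 ≤ p ^ e * m := Nat.mul_le_mul_left _ (by omega)
        omega
      have hmn : m < n := by
        have : 2 * m ≤ p ^ e * m := Nat.mul_le_mul_right _ (by omega)
        omega
      have h1 : u ∈ H := by
        refine ih (orderOf u) ?_ u rfl ((hu.trans ?_).trans hxd)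
        · exact lt_of_le_of_lt (Nat.le_of_dvd (by positivity) hu) hpen
        · rw [hxn, ← hsplit]; exact dvd_mul_right _ _
      have h2 : v ∈ H := by
        refine ih (orderOf v) ?_ v rfl ((hv.trans ?_).trans hxd)
        · exact lt_of_le_of_lt (Nat.le_of_dvd hm0 hv) hmn
        · rw [hxn, ← hsplit]; exact dvd_mul_left _ _
      rw [huv]; exact mul_mem h1 h2

private lemma commute_of_coprime [Finite G] (hnil : Group.IsNilpotent G)
    {p k : ℕ} (hp : p.Prime) {x : G} (hx : orderOf x = p ^ k)
    {y : G} (hy : ¬ p ∣ orderOf y) : x * y = y * x := by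
  have hmem : y ∈ Subgroup.centralizer ({x} : Set G) := by
    refine mem_of_primePow (Subgroup.centralizer {x}) (orderOf y) ?_ y dvd_rfl
    intro y' hpp hdvd
    obtain ⟨r, s, hr, hs0, hrs⟩ := hpp
    have hrp : r.Prime := Nat.prime_iff.mpr hr
    have hrne : p ≠ r := by
      intro hpr
      apply hy
      have h1 : p ∣ orderOf y' := by
        rw [← hrs, hpr]
        exact dvd_pow_self r hs0.ne'
      exact h1.trans hdvd
    refine Subgroup.mem_centralizer_iff.mpr ?_
    intro h hh
    rw [Set.mem_singleton_iff] at hh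
    subst hh
    exact commute_of_prime_pow hnil hp hrp hrne hx hrs.symm
  exact Subgroup.mem_centralizer_iff.mp hmem x (Set.mem_singleton x)

private lemma exists_avoid [Finite G] (H : Subgroup G) (hH : H ≠ ⊤) :
    ∃ b : G, ∀ g : G, g * b * g⁻¹ ∉ H := by
  classical
  cases nonempty_fintype G
  set Hs : Finset G := Set.toFinset (H : Set G) with hHs
  set Bad : Finset G := {1} ∪ (Finset.univ : Finset (G ⧸ H)).biUnion
      (fun c => ((Hs.image fun x => c.out * x * c.out⁻¹).erase 1)) with hBad
  have hcover : ∀ g x : G, x ∈ H → g * x * g⁻¹ ∈ Bad := by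
    intro g x hx
    rcases eq_or_ne (g * x * g⁻¹) 1 with h1 | h1
    · rw [h1, hBad]
      exact Finset.mem_union_left _ (Finset.mem_singleton_self 1)
    · rw [hBad]
      apply Finset.mem_union_right
      apply Finset.mem_biUnion.mpr
      refine ⟨QuotientGroup.mk g, Finset.mem_univ _, ?_⟩
      obtain ⟨h0, hh0⟩ := QuotientGroup.mk_out_eq_mul H g
      refine Finset.mem_erase.mpr ⟨h1, Finset.mem_image.mpr
        ⟨(h0 : G)⁻¹ * x * (h0 : G), ?_, ?_⟩⟩
      · rw [hHs, Set.mem_toFinset]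
        exact mul_mem (mul_mem (inv_mem h0.2) hx) h0.2
      · rw [hh0]; group
  have hHpos : 0 < Hs.card := by
    refine Finset.card_pos.mpr ⟨1, ?_⟩
    rw [hHs, Set.mem_toFinset]; exact one_mem H
  have hbound : Bad.card ≤ 1 + Fintype.card (G ⧸ H) * (Hs.card - 1) := by
    refine le_trans (Finset.card_union_le _ _) ?_
    have h1 : ({1} : Finset G).card = 1 := Finset.card_singleton 1
    rw [h1]
    refine Nat.add_le_add_left ?_ 1
    refine le_trans Finset.card_biUnion_le ?_
    rw [← Finset.card_univ (α := G ⧸ H), ← smul_eq_mul, ← Finset.sum_const]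
    refine Finset.sum_le_sum ?_
    intro c _
    have h1mem : (1 : G) ∈ Hs.image fun x => c.out * x * c.out⁻¹ := by
      refine Finset.mem_image.mpr ⟨1, ?_, by simp⟩
      rw [hHs, Set.mem_toFinset]; exact one_mem H
    rw [Finset.card_erase_of_mem h1mem]
    exact Nat.sub_le_sub_right Finset.card_image_le 1
  have htotal : Fintype.card G = Fintype.card (G ⧸ H) * Hs.card := by
    have h1 : Nat.card G = Nat.card (G ⧸ H) * Nat.card H :=
      Subgroup.card_eq_card_quotient_mul_card_subgroup H
    have h2 : Hs.card = Nat.card H := by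
      rw [hHs, Set.toFinset_card, ← Nat.card_eq_fintype_card]
      simp
    rw [← Nat.card_eq_fintype_card, ← Nat.card_eq_fintype_card, h1, h2]
  have hidx : 2 ≤ Fintype.card (G ⧸ H) := by
    have h1 : H.index ≠ 1 := fun h => hH (Subgroup.index_eq_one.mp h)
    have h2 : H.index = Fintype.card (G ⧸ H) := by
      rw [Subgroup.index, Nat.card_eq_fintype_card]
    have h3 : 0 < Fintype.card (G ⧸ H) := Fintype.card_pos
    omega
  have hlt : Bad.card < Fintype.card G := by
    set N := Fintype.card (G ⧸ H) with hN
    set hcard := Hs.card with hh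
    have key : N * hcard = N * (hcard - 1) + N := by
      have e1 : hcard - 1 + 1 = hcard := Nat.succ_pred_eq_of_pos hHpos
      calc N * hcard = N * (hcard - 1 + 1) := by rw [e1]
        _ = N * (hcard - 1) + N := by rw [Nat.mul_succ]
    rw [htotal, key]
    have hb2 : Bad.card ≤ 1 + N * (hcard - 1) := hbound
    generalize N * (hcard - 1) = A at hb2 ⊢
    omega
  obtain ⟨b, hb⟩ : ∃ b : G, b ∉ Bad := by
    by_contra hall
    push_neg at hall
    have hsub : (Finset.univ : Finset G) ⊆ Bad := fun g _ => hall g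
    have := Finset.card_le_card hsub
    rw [Finset.card_univ] at this
    omega
  refine ⟨b, fun g hg => ?_⟩
  have hmem := hcover g⁻¹ (g * b * g⁻¹) hg
  have e : g⁻¹ * (g * b * g⁻¹) * g⁻¹⁻¹ = b := by group
  rw [e] at hmem
  exact hb hmem

end Aux

theorem nilpotent_ccc_2K2_free_iff_abelian (G : Type*) [Group G] [Finite G]
    (hnil : Group.IsNilpotent G)
    (h2 : ∃ p q : ℕ, p.Prime ∧ q.Prime ∧ p ≠ q ∧ p ∣ Nat.card G ∧ q ∣ Nat.card G) :
    ¬ Has2K2 (cccGraph G) ↔ ∀ a b : G, a * b = b * a := by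
  constructor
  · intro hno
    by_contra hab
    push_neg at hab
    -- there is a noncentral element of prime power order
    have hPP : ∃ a : G, a ∉ Subgroup.center G ∧ ∃ p k : ℕ, p.Prime ∧ orderOf a = p ^ k := by
      by_contra hc
      push_neg at hc
      obtain ⟨x0, y0, hxy⟩ := hab
      apply hxy
      have hcen : ∀ w : G, w ∈ Subgroup.center G := by
        intro w
        refine mem_of_primePow (Subgroup.center G) (orderOf w) ?_ w dvd_rfl
        intro y hy _
        by_contra hyc
        obtain ⟨r, s, hr, hs, hrs⟩ := hy
        exact hc y hyc r s (Nat.prime_iff.mpr hr) hrs.symm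
      exact Subgroup.mem_center_iff.mp (hcen y0) x0
    obtain ⟨a, ha, p, k, hp, hak⟩ := hPP
    obtain ⟨p1, p2, hp1, hp2, hne12, hd1, hd2⟩ := h2
    obtain ⟨q, hq, hqp, hqd⟩ : ∃ q : ℕ, q.Prime ∧ q ≠ p ∧ q ∣ Nat.card G := by
      rcases eq_or_ne p1 p with rfl | h
      · exact ⟨p2, hp2, hne12.symm, hd2⟩
      · exact ⟨p1, hp1, h, hd1⟩
    have hpq : p ≠ q := fun h => hqp h.symm
    haveI := Fact.mk hq
    obtain ⟨z, hz⟩ := exists_prime_orderOf_dvd_card' (G := G) q hqd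
    -- the centralizer of a is proper
    have hHc : Subgroup.centralizer ({a} : Set G) ≠ ⊤ := by
      intro htop
      apply ha
      rw [Subgroup.mem_center_iff]
      intro g
      have hg : g ∈ Subgroup.centralizer ({a} : Set G) := htop ▸ Subgroup.mem_top g
      exact (Subgroup.mem_centralizer_iff.mp hg a (Set.mem_singleton a)).symm
    obtain ⟨b0, hb0⟩ := exists_avoid _ hHc
    have hb0' : ∀ g : G, a * (g * b0 * g⁻¹) ≠ (g * b0 * g⁻¹) * a := by
      intro g hcomm
      refine hb0 g (Subgroup.mem_centralizer_iff.mpr ?_)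
      intro h hh
      rw [Set.mem_singleton_iff] at hh
      subst hh
      exact hcomm
    -- extract the p-part of b0
    have hb0pos : 0 < orderOf b0 := orderOf_pos b0
    set s := (orderOf b0).factorization p with hsdef
    have hsplitb : p ^ s * (orderOf b0 / p ^ s) = orderOf b0 :=
      Nat.ordProj_mul_ordCompl_eq_self (orderOf b0) p
    have hcopm : Nat.Coprime p (orderOf b0 / p ^ s) :=
      Nat.coprime_ordCompl hp (by omega)
    have hcob : Nat.Coprime (p ^ s) (orderOf b0 / p ^ s) := Nat.Coprime.pow_left _ hcopm
    have hmpos : 0 < orderOf b0 / p ^ s := Nat.ordCompl_pos p (by omega)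
    obtain ⟨b, v, hbv, hbvc, hbord, hvord⟩ :=
      exists_split b0 (pow_pos hp.pos s) hmpos hcob (by rw [hsplitb])
    obtain ⟨t, htle, ht⟩ := (Nat.dvd_prime_pow hp).mp hbord
    have hpv : ¬ p ∣ orderOf v := fun hdvd =>
      ((Nat.Prime.coprime_iff_not_dvd hp).mp hcopm) (hdvd.trans hvord)
    -- no conjugate of b commutes with a
    have hKa : ∀ g : G, a * (g * b * g⁻¹) ≠ (g * b * g⁻¹) * a := by
      intro g hcomm
      apply hb0' g
      have hvcomm : a * (g * v * g⁻¹) = (g * v * g⁻¹) * a := by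
        refine commute_of_coprime hnil hp hak ?_
        rw [orderOf_conj']
        exact hpv
      have e : g * b0 * g⁻¹ = (g * b * g⁻¹) * (g * v * g⁻¹) := by rw [hbv]; group
      rw [e]
      have hc1 : Commute a (g * b * g⁻¹) := hcomm
      have hc2 : Commute a (g * v * g⁻¹) := hvcomm
      exact hc1.mul_right hc2
    -- no conjugate of b commutes with any conjugate of a
    have hK : ∀ g h : G, (g * a * g⁻¹) * (h * b * h⁻¹) ≠ (h * b * h⁻¹) * (g * a * g⁻¹) := by
      intro g h hcomm
      apply hKa (g⁻¹ * h)
      have e1 : (g⁻¹ * h) * b * (g⁻¹ * h)⁻¹ = g⁻¹ * (h * b * h⁻¹) * g := by group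
      rw [e1]
      calc a * (g⁻¹ * (h * b * h⁻¹) * g)
          = g⁻¹ * ((g * a * g⁻¹) * (h * b * h⁻¹)) * g := by group
        _ = g⁻¹ * ((h * b * h⁻¹) * (g * a * g⁻¹)) * g := by rw [hcomm]
        _ = (g⁻¹ * (h * b * h⁻¹) * g) * a := by group
    have hK' : ∀ c : G, (c * a * c⁻¹) * b ≠ b * (c * a * c⁻¹) := by
      intro c
      have := hK c 1
      simpa using this
    have hKab : a * b ≠ b * a := by
      have := hK 1 1
      simpa using this
    -- z commutes with all conjugates of p-elements
    have hcommz : ∀ (x : G) (jx : ℕ), orderOf x = p ^ jx →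
        ∀ c : G, x * (c * z * c⁻¹) = (c * z * c⁻¹) * x := by
      intro x jx hx c
      refine commute_of_prime_pow (l := 1) hnil hp hq hpq hx ?_
      rw [orderOf_conj', hz, pow_one]
    have haz : a * z = z * a := by
      have := hcommz a k hak 1
      simpa using this
    have hbz : b * z = z * b := by
      have := hcommz b t ht 1
      simpa using this
    -- the magic exponent α
    have hcoK : Nat.Coprime (p ^ (k + s + 1)) q :=
      Nat.Coprime.pow_left _ ((Nat.coprime_primes hp hq).mpr hpq)
    obtain ⟨α, hα1, hα2⟩ := Nat.chineseRemainder hcoK 1 0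
    have hordb' : orderOf b ∣ p ^ (k + s + 1) :=
      hbord.trans (pow_dvd_pow p (by omega))
    have horda' : orderOf a ∣ p ^ (k + s + 1) := by
      rw [hak]; exact pow_dvd_pow p (by omega)
    have hfix : ∀ x : G, orderOf x ∣ p ^ (k + s + 1) → x ^ α = x := by
      intro x hx
      have h1 : α ≡ 1 [MOD orderOf x] := Nat.ModEq.of_dvd hx hα1
      calc x ^ α = x ^ 1 := pow_eq_pow_iff_modEq.mpr h1
        _ = x := pow_one x
    have hzα : z ^ α = 1 := by
      apply orderOf_dvd_iff_pow_eq_one.mp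
      rw [hz]
      exact (Nat.modEq_zero_iff_dvd).mp hα2
    have hconjα : ∀ x : G, orderOf x ∣ p ^ (k + s + 1) →
        ∀ c : G, (c * x * c⁻¹) ^ α = c * x * c⁻¹ := by
      intro x hx c
      rw [conj_pow, hfix x hx]
    have hconjzα : ∀ (x : G) (jx : ℕ), orderOf x = p ^ jx → orderOf x ∣ p ^ (k + s + 1) →
        ∀ c : G, (c * (x * z) * c⁻¹) ^ α = c * x * c⁻¹ := by
      intro x jx hx hx2 c
      have hxz : Commute x z := by
        have := hcommz x jx hx 1
        exact (by simpa using this : x * z = z * x)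
      rw [conj_pow, hxz.mul_pow, hfix x hx2, hzα, mul_one]
    have hAZ' : (a * z) ^ α = a := by
      have := hconjzα a k hak horda' 1
      simpa using this
    have hBZ' : (b * z) ^ α = b := by
      have := hconjzα b t ht hordb' 1
      simpa using this
    have hzne : z ≠ 1 := by
      intro h
      rw [h, orderOf_one] at hz
      exact hq.ne_one hz.symm
    -- noncentrality of the four chosen elements
    have haznc : a * z ∉ Subgroup.center G := by
      intro hcen
      have hc1 : Commute b (a * z) := Subgroup.mem_center_iff.mp hcen b
      have hc2 : Commute b z := hbz
      have hc3 : Commute b a := by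
        have h4 := hc1.mul_right hc2.inv_right
        rwa [mul_inv_cancel_right] at h4
      exact hKab hc3.symm
    have hbnc : b ∉ Subgroup.center G := by
      intro hcen
      exact hKab (Subgroup.mem_center_iff.mp hcen a)
    have hbznc : b * z ∉ Subgroup.center G := by
      intro hcen
      have hc1 : Commute a (b * z) := Subgroup.mem_center_iff.mp hcen a
      have hc2 : Commute a z := haz
      have hc3 : Commute a b := by
        have h4 := hc1.mul_right hc2.inv_right
        rwa [mul_inv_cancel_right] at h4
      exact hKab hc3
    -- the four vertices
    let vA : NCClass G := ⟨ConjClasses.mk a, a, rfl, ha⟩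
    let vB : NCClass G := ⟨ConjClasses.mk (a * z), a * z, rfl, haznc⟩
    let vC : NCClass G := ⟨ConjClasses.mk b, b, rfl, hbnc⟩
    let vD : NCClass G := ⟨ConjClasses.mk (b * z), b * z, rfl, hbznc⟩
    have conj_of_mk_eq : ∀ x y : G, ConjClasses.mk x = ConjClasses.mk y →
        ∃ c : G, c * x * c⁻¹ = y := by
      intro x y h
      exact isConj_iff.mp (ConjClasses.mk_eq_mk_iff_isConj.mp h)
    -- pairwise distinctness at the class level
    have hAB : ConjClasses.mk a ≠ ConjClasses.mk (a * z) := by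
      intro h
      obtain ⟨c, hc⟩ := conj_of_mk_eq _ _ h
      have h2 : (c * a * c⁻¹) ^ α = c * a * c⁻¹ := hconjα a horda' c
      rw [hc, hAZ'] at h2
      exact hzne (mul_eq_left.mp h2.symm)
    have hCD : ConjClasses.mk b ≠ ConjClasses.mk (b * z) := by
      intro h
      obtain ⟨c, hc⟩ := conj_of_mk_eq _ _ h
      have h2 : (c * b * c⁻¹) ^ α = c * b * c⁻¹ := hconjα b hordb' c
      rw [hc, hBZ'] at h2
      exact hzne (mul_eq_left.mp h2.symm)
    have hAC : ConjClasses.mk a ≠ ConjClasses.mk b := by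
      intro h
      obtain ⟨c, hc⟩ := conj_of_mk_eq _ _ h
      exact hK' c (by rw [hc])
    have hAD : ConjClasses.mk a ≠ ConjClasses.mk (b * z) := by
      intro h
      obtain ⟨c, hc⟩ := conj_of_mk_eq _ _ h
      have h2 : (c * a * c⁻¹) ^ α = c * a * c⁻¹ := hconjα a horda' c
      rw [hc, hBZ'] at h2
      exact hzne (mul_eq_left.mp h2.symm)
    have hBC : ConjClasses.mk (a * z) ≠ ConjClasses.mk b := by
      intro h
      obtain ⟨c, hc⟩ := conj_of_mk_eq _ _ h
      have h2 : (c * (a * z) * c⁻¹) ^ α = c * a * c⁻¹ := hconjzα a k hak horda' c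
      rw [hc, hfix b hordb'] at h2
      exact hK' c (by rw [← h2])
    have hBD : ConjClasses.mk (a * z) ≠ ConjClasses.mk (b * z) := by
      intro h
      obtain ⟨c, hc⟩ := conj_of_mk_eq _ _ h
      have h2 : (c * (a * z) * c⁻¹) ^ α = c * a * c⁻¹ := hconjzα a k hak horda' c
      rw [hc, hBZ'] at h2
      exact hK' c (by rw [← h2])
    -- edges
    have hAdjAB : (cccGraph G).Adj vA vB := by
      refine ⟨fun h => hAB (congrArg (fun w : NCClass G => w.1) h), a, a * z, rfl, rfl,
        closure_pair_comm ?_⟩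
      exact (Commute.refl a).mul_right haz
    have hAdjCD : (cccGraph G).Adj vC vD := by
      refine ⟨fun h => hCD (congrArg (fun w : NCClass G => w.1) h), b, b * z, rfl, rfl,
        closure_pair_comm ?_⟩
      exact (Commute.refl b).mul_right hbz
    -- non-edges
    have hnAC : ¬ (cccGraph G).Adj vA vC := by
      rintro ⟨-, x', y', hx', hy', hP⟩
      obtain ⟨c, hc⟩ := conj_of_mk_eq a x' hx'.symm
      obtain ⟨d, hd⟩ := conj_of_mk_eq b y' hy'.symm
      have hcomm : x' * y' = y' * x' :=
        hP x' (Subgroup.subset_closure (by simp)) y' (Subgroup.subset_closure (by simp))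
      rw [← hc, ← hd] at hcomm
      exact hK c d hcomm
    have hnAD : ¬ (cccGraph G).Adj vA vD := by
      rintro ⟨-, x', y', hx', hy', hP⟩
      obtain ⟨c, hc⟩ := conj_of_mk_eq a x' hx'.symm
      obtain ⟨d, hd⟩ := conj_of_mk_eq (b * z) y' hy'.symm
      have hcomm : x' * y' = y' * x' :=
        hP x' (Subgroup.subset_closure (by simp)) y' (Subgroup.subset_closure (by simp))
      rw [← hc, ← hd] at hcomm
      have hcc : Commute (c * a * c⁻¹) (d * (b * z) * d⁻¹) := hcomm
      have hcc2 := hcc.pow_right α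
      rw [hconjzα b t ht hordb' d] at hcc2
      exact hK c d hcc2
    have hnBC : ¬ (cccGraph G).Adj vB vC := by
      rintro ⟨-, x', y', hx', hy', hP⟩
      obtain ⟨c, hc⟩ := conj_of_mk_eq (a * z) x' hx'.symm
      obtain ⟨d, hd⟩ := conj_of_mk_eq b y' hy'.symm
      have hcomm : x' * y' = y' * x' :=
        hP x' (Subgroup.subset_closure (by simp)) y' (Subgroup.subset_closure (by simp))
      rw [← hc, ← hd] at hcomm
      have hcc : Commute (c * (a * z) * c⁻¹) (d * b * d⁻¹) := hcomm
      have hcc2 := hcc.pow_left α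
      rw [hconjzα a k hak horda' c] at hcc2
      exact hK c d hcc2
    have hnBD : ¬ (cccGraph G).Adj vB vD := by
      rintro ⟨-, x', y', hx', hy', hP⟩
      obtain ⟨c, hc⟩ := conj_of_mk_eq (a * z) x' hx'.symm
      obtain ⟨d, hd⟩ := conj_of_mk_eq (b * z) y' hy'.symm
      have hcomm : x' * y' = y' * x' :=
        hP x' (Subgroup.subset_closure (by simp)) y' (Subgroup.subset_closure (by simp))
      rw [← hc, ← hd] at hcomm
      have hcc : Commute (c * (a * z) * c⁻¹) (d * (b * z) * d⁻¹) := hcomm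
      have hcc2 := (hcc.pow_left α).pow_right α
      rw [hconjzα a k hak horda' c, hconjzα b t ht hordb' d] at hcc2
      exact hK c d hcc2
    exact hno ⟨vA, vB, vC, vD,
      fun h => hAB (congrArg (fun w : NCClass G => w.1) h),
      fun h => hAC (congrArg (fun w : NCClass G => w.1) h),
      fun h => hAD (congrArg (fun w : NCClass G => w.1) h),
      fun h => hBC (congrArg (fun w : NCClass G => w.1) h),
      fun h => hBD (congrArg (fun w : NCClass G => w.1) h),
      fun h => hCD (congrArg (fun w : NCClass G => w.1) h),
      hAdjAB, hAdjCD, hnAC, hnAD, hnBC, hnBD⟩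
  · intro hcomm h2k2
    obtain ⟨va, vb, vc, vd, -, -, -, -, -, -, -, -, -, -, -, -⟩ := h2k2
    obtain ⟨x, -, hx⟩ := va.2
    exact hx (Subgroup.mem_center_iff.mpr fun g => hcomm g x)
end

section
/- For n ≥ 1, the graph Γ_CCC(Sym(n)) is a split graph if and only if n ≤ 4, and it is a threshold graph if and only if n ≤ 4. -/
open Fin.NatCast

namespace CCCAux

open Equiv Subgroup

variable {G : Type*} [Group G]

lemma closure_pair_comm {a b : G} (h : a * b = b * a) :
    ∀ x ∈ Subgroup.closure ({a, b} : Set G), ∀ y ∈ Subgroup.closure ({a, b} : Set G),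
      x * y = y * x := by
  have hsub : ({a, b} : Set G) ⊆ Subgroup.centralizer ({a, b} : Set G) := by
    intro x hx
    rw [SetLike.mem_coe, Subgroup.mem_centralizer_iff]
    intro z hz
    rcases hx with rfl | hx
    · rcases hz with rfl | hz
      · rfl
      · rcases hz with rfl; exact h.symm
    · rcases hx with rfl
      rcases hz with rfl | hz
      · exact h
      · rcases hz with rfl; rfl
  have h1 : Subgroup.closure ({a, b} : Set G) ≤ Subgroup.centralizer ({a, b} : Set G) :=
    (Subgroup.closure_le _).2 hsub
  intro x hx y hy
  have hx' := h1 hx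
  rw [Subgroup.mem_centralizer_iff] at hx'
  have h2 : ({a, b} : Set G) ⊆ Subgroup.centralizer ({x} : Set G) := by
    intro z hz
    rw [SetLike.mem_coe, Subgroup.mem_centralizer_iff]
    intro w hw
    rcases hw with rfl
    exact (hx' z hz).symm
  have h3 := (Subgroup.closure_le _).2 h2 hy
  rw [Subgroup.mem_centralizer_iff] at h3
  exact h3 x (Set.mem_singleton x)

lemma rep_not_central (c : NCClass G) {a : G} (ha : ConjClasses.mk a = c.1) :
    a ∉ Subgroup.center G := by
  obtain ⟨x, hx, hxc⟩ := c.2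
  intro hmem
  apply hxc
  have hconj : IsConj a x := ConjClasses.mk_eq_mk_iff_isConj.1 (ha.trans hx.symm)
  obtain ⟨g, hg⟩ := isConj_iff.1 hconj
  have hcomm := (Subgroup.mem_center_iff.1 hmem) g
  have hxa : x = a := by rw [← hg, hcomm]; group
  rwa [hxa]

lemma rep_ne_one {a : G} (ha : a ∉ Subgroup.center G) : a ≠ 1 := by
  rintro rfl; exact ha (Subgroup.center G).one_mem

lemma conj_mul_conj (g x y : G) : (g * x * g⁻¹) * (g * y * g⁻¹) = g * (x * y) * g⁻¹ := by
  group

lemma conj_eq_one_iff {g x : G} : g * x * g⁻¹ = 1 ↔ x = 1 := by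
  constructor
  · intro h
    have : g⁻¹ * (g * x * g⁻¹) * g = g⁻¹ * 1 * g := by rw [h]
    simpa [mul_assoc] using this
  · rintro rfl; group

lemma commute_conj {x y : G} (h : Commute x y) (g : G) :
    Commute (g * x * g⁻¹) (g * y * g⁻¹) := by
  unfold Commute SemiconjBy at h ⊢
  rw [conj_mul_conj, conj_mul_conj, h]

/-- destructing an adjacency in the commuting conjugacy class graph -/
lemma adj_destruct {v w : NCClass G} (h : (cccGraph G).Adj v w) :
    ∃ x y : G, ConjClasses.mk x = v.1 ∧ ConjClasses.mk y = w.1 ∧ x * y = y * x ∧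
      x ∉ Subgroup.center G ∧ y ∉ Subgroup.center G ∧ v ≠ w := by
  obtain ⟨hne, x, y, hx, hy, hP⟩ := h
  refine ⟨x, y, hx, hy, ?_, rep_not_central v hx, rep_not_central w hy, hne⟩
  exact hP x (Subgroup.subset_closure (Set.mem_insert x {y})) y
    (Subgroup.subset_closure (Set.mem_insert_of_mem _ rfl))

lemma adj_intro {a b : G} (ha : a ∉ Subgroup.center G) (hb : b ∉ Subgroup.center G)
    (hcomm : a * b = b * a) (hne : ¬ IsConj a b) :
    (cccGraph G).Adj ⟨ConjClasses.mk a, a, rfl, ha⟩ ⟨ConjClasses.mk b, b, rfl, hb⟩ := by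
  refine ⟨?_, a, b, rfl, rfl, closure_pair_comm hcomm⟩
  intro h
  exact hne (ConjClasses.mk_eq_mk_iff_isConj.1 (congrArg Subtype.val h))

lemma adj_elim {v w : NCClass G} {r s : G} (hv : v.1 = ConjClasses.mk r)
    (hw : w.1 = ConjClasses.mk s) (h : (cccGraph G).Adj v w) :
    ∃ g : G, Commute (g * r * g⁻¹) s := by
  obtain ⟨x, y, hx, hy, hc, -, -, -⟩ := adj_destruct h
  have hrx : IsConj r x := ConjClasses.mk_eq_mk_iff_isConj.1 ((hv ▸ hx : _).symm)
  have hsy : IsConj s y := ConjClasses.mk_eq_mk_iff_isConj.1 ((hw ▸ hy : _).symm)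
  obtain ⟨g, hg⟩ := isConj_iff.1 hrx
  obtain ⟨k, hk⟩ := isConj_iff.1 hsy
  have hcomm : Commute x y := hc
  have h2 := commute_conj hcomm k⁻¹
  rw [← hg, ← hk] at h2
  have h3 : k⁻¹ * (k * s * k⁻¹) * k⁻¹⁻¹ = s := by group
  rw [h3] at h2
  refine ⟨k⁻¹ * g, ?_⟩
  have h4 : k⁻¹ * (g * r * g⁻¹) * k⁻¹⁻¹ = (k⁻¹ * g) * r * (k⁻¹ * g)⁻¹ := by group
  rwa [h4] at h2

lemma not_adj {v w : NCClass G} {r s : G} (hv : v.1 = ConjClasses.mk r)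
    (hw : w.1 = ConjClasses.mk s)
    (key : ∀ g : G, ¬ Commute (g * r * g⁻¹) s) : ¬ (cccGraph G).Adj v w := by
  intro h
  obtain ⟨g, hg⟩ := adj_elim hv hw h
  exact key g hg

lemma vert_ne {v w : NCClass G} {r s : G} (hv : v.1 = ConjClasses.mk r)
    (hw : w.1 = ConjClasses.mk s) (key : ¬ IsConj r s) : v ≠ w := by
  intro h
  exact key (ConjClasses.mk_eq_mk_iff_isConj.1 (hv.symm.trans (h ▸ hw)))

lemma not_isConj_of_key {r s : G} (key : ∀ g : G, g * r * g⁻¹ ≠ s) : ¬ IsConj r s := by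
  intro h
  obtain ⟨g, hg⟩ := isConj_iff.1 h
  exact key g hg

end CCCAux
namespace CCCAux

set_option linter.unusedSectionVars false

open Equiv

variable {α : Type*} [DecidableEq α]

lemma perm_pow_apply_fix {σ : Equiv.Perm α} {y : α} (h : σ y = y) (j : ℕ) :
    (σ ^ j) y = y := by
  induction j with
  | zero => simp
  | succ i ih => rw [pow_succ, Equiv.Perm.mul_apply, h, ih]

lemma commute_apply {σ π : Equiv.Perm α} (h : Commute π σ) (y : α) :
    π (σ y) = σ (π y) := by
  have := congrArg (fun f : Equiv.Perm α => f y) h.eq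
  simpa [Equiv.Perm.mul_apply] using this

lemma pow_eq_one_of_fix {σ : Equiv.Perm α} {x0 : α}
    (hreach : ∀ y, σ y ≠ y → ∃ i : ℕ, (σ ^ i) x0 = y)
    {x : α} {j : ℕ} (hx : σ x ≠ x) (hfix : (σ ^ j) x = x) : σ ^ j = 1 := by
  obtain ⟨i, hi⟩ := hreach x hx
  have hx0 : (σ ^ j) x0 = x0 := by
    have h1 : (σ ^ i) ((σ ^ j) x0) = (σ ^ i) x0 := by
      have hc : (σ ^ i) ((σ ^ j) x0) = (σ ^ j) ((σ ^ i) x0) := by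
        rw [← Equiv.Perm.mul_apply, ← Equiv.Perm.mul_apply, ← pow_add, ← pow_add, add_comm]
      rw [hc, hi, hfix, ← hi]
    exact (σ ^ i).injective h1
  ext y
  by_cases hy : σ y = y
  · simp [perm_pow_apply_fix hy j]
  · obtain ⟨s, hs⟩ := hreach y hy
    have : (σ ^ j) ((σ ^ s) x0) = (σ ^ s) ((σ ^ j) x0) := by
      rw [← Equiv.Perm.mul_apply, ← Equiv.Perm.mul_apply, ← pow_add, ← pow_add, add_comm]
    simp [← hs, this, hx0]

lemma commute_swap_cases {π : Equiv.Perm α} {a b : α} (hab : a ≠ b)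
    (h : Commute π (Equiv.swap a b)) :
    (π a = a ∧ π b = b) ∨ (π a = b ∧ π b = a) := by
  have h1 : π b = Equiv.swap a b (π a) := by
    have h2 := commute_apply h a
    rwa [Equiv.swap_apply_left] at h2
  by_cases ha : π a = a
  · left
    refine ⟨ha, ?_⟩
    rw [ha, Equiv.swap_apply_left] at h1
    exact h1
  · by_cases hb : π a = b
    · right
      refine ⟨hb, ?_⟩
      rw [hb, Equiv.swap_apply_right] at h1
      exact h1
    · exfalso
      rw [Equiv.swap_apply_of_ne_of_ne ha hb] at h1
      exact hab (π.injective h1).symm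

lemma swap_commute_of_fixes {σ : Equiv.Perm α} {a b : α} (ha : σ a = a) (hb : σ b = b) :
    Commute σ (Equiv.swap a b) := by
  unfold Commute SemiconjBy
  ext y
  by_cases hya : y = a
  · subst hya
    simp [Equiv.Perm.mul_apply, Equiv.swap_apply_left, ha, hb]
  · by_cases hyb : y = b
    · subst hyb
      simp [Equiv.Perm.mul_apply, Equiv.swap_apply_right, ha, hb]
    · have h1 : σ y ≠ a := fun h => hya (σ.injective (h.trans ha.symm))
      have h2 : σ y ≠ b := fun h => hyb (σ.injective (h.trans hb.symm))
      simp [Equiv.Perm.mul_apply, Equiv.swap_apply_of_ne_of_ne hya hyb,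
        Equiv.swap_apply_of_ne_of_ne h1 h2]

lemma cent2a {σ π : Equiv.Perm α} {x0 a b : α} (hx0 : σ x0 ≠ x0)
    (hreach : ∀ y, σ y ≠ y → ∃ i : ℕ, (σ ^ i) x0 = y)
    (hfixab : ∀ y, σ y = y → y = a ∨ y = b)
    (hcomm : Commute π σ) (hpa : π a = a) (hpb : π b = b) :
    ∃ t : ℕ, π = σ ^ t := by
  have hπx0 : σ (π x0) ≠ π x0 := by
    intro h
    rw [← commute_apply hcomm x0] at h
    exact hx0 (π.injective h)
  obtain ⟨t, ht⟩ := hreach (π x0) hπx0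
  refine ⟨t, ?_⟩
  ext y
  by_cases hy : σ y = y
  · rcases hfixab y hy with rfl | rfl
    · rw [hpa, perm_pow_apply_fix hy]
    · rw [hpb, perm_pow_apply_fix hy]
  · obtain ⟨s, hs⟩ := hreach y hy
    have hps : π ((σ ^ s) x0) = (σ ^ s) (π x0) := by
      have := (hcomm.pow_right s).eq
      have h2 := congrArg (fun f : Equiv.Perm α => f x0) this
      simpa [Equiv.Perm.mul_apply] using h2
    have hcomm2 : (σ ^ s) ((σ ^ t) x0) = (σ ^ t) ((σ ^ s) x0) := by
      rw [← Equiv.Perm.mul_apply, ← Equiv.Perm.mul_apply, ← pow_add, ← pow_add, add_comm]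
    rw [← hs, hps, ← ht, hcomm2]

lemma cent2 {σ π : Equiv.Perm α} {x0 a b : α} (hx0 : σ x0 ≠ x0)
    (hreach : ∀ y, σ y ≠ y → ∃ i : ℕ, (σ ^ i) x0 = y)
    (hab : a ≠ b) (hfa : σ a = a) (hfb : σ b = b)
    (hfixab : ∀ y, σ y = y → y = a ∨ y = b) (hcomm : Commute π σ) :
    (∃ t : ℕ, π = σ ^ t) ∨ (∃ t : ℕ, π = σ ^ t * Equiv.swap a b) := by
  have hπa : σ (π a) = π a := by
    rw [← commute_apply hcomm a, hfa]
  have hπb : σ (π b) = π b := by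
    rw [← commute_apply hcomm b, hfb]
  rcases hfixab _ hπa with h1 | h1
  · have h2 : π b = b := by
      rcases hfixab _ hπb with h2 | h2
      · exfalso; exact hab (π.injective (h1.trans h2.symm) : a = b)
      · exact h2
    exact Or.inl (cent2a hx0 hreach hfixab hcomm h1 h2)
  · have h2 : π b = a := by
      rcases hfixab _ hπb with h2 | h2
      · exact h2
      · exfalso; exact hab (π.injective (h1.trans h2.symm) : a = b)
    right
    have hsc : Commute (Equiv.swap a b) σ := (swap_commute_of_fixes hfa hfb).symm
    have hc2 : Commute (π * Equiv.swap a b) σ := hcomm.mul_left hsc.symm.symm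
    have h3 : (π * Equiv.swap a b) a = a := by
      rw [Equiv.Perm.mul_apply, Equiv.swap_apply_left, h2]
    have h4 : (π * Equiv.swap a b) b = b := by
      rw [Equiv.Perm.mul_apply, Equiv.swap_apply_right, h1]
    obtain ⟨t, ht⟩ := cent2a hx0 hreach hfixab hc2 h3 h4
    refine ⟨t, ?_⟩
    rw [← ht, mul_assoc, Equiv.swap_mul_self, mul_one]

lemma not_mem_center_of_moves {n : ℕ} (hn : 3 ≤ n) {σ : Equiv.Perm (Fin n)} {x : Fin n}
    (hx : σ x ≠ x) : σ ∉ Subgroup.center (Equiv.Perm (Fin n)) := by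
  have hw : ∃ w : Fin n, w ≠ x ∧ w ≠ σ x := by
    by_contra hcon
    push_neg at hcon
    have hsub : (Finset.univ : Finset (Fin n)) ⊆ {x, σ x} := by
      intro w _
      rcases eq_or_ne w x with rfl | hwx
      · exact Finset.mem_insert_self _ _
      · rw [hcon w hwx]
        exact Finset.mem_insert_of_mem (Finset.mem_singleton_self _)
    have h1 := Finset.card_le_card hsub
    have h2 : ({x, σ x} : Finset (Fin n)).card ≤ 2 := Finset.card_insert_le _ _ |>.trans (by simp)
    rw [Finset.card_univ, Fintype.card_fin] at h1
    omega
  obtain ⟨w, hwx, hwσ⟩ := hw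
  intro hmem
  have hcomm := Subgroup.mem_center_iff.1 hmem (Equiv.swap x w)
  have := congrArg (fun f : Equiv.Perm (Fin n) => f x) hcomm
  simp only [Equiv.Perm.mul_apply, Equiv.swap_apply_left] at this
  rw [Equiv.swap_apply_of_ne_of_ne hx (fun h => hwσ h.symm)] at this
  exact hwx (σ.injective this).symm

end CCCAux
namespace CCCAux

open Equiv

set_option maxRecDepth 100000 in
set_option maxHeartbeats 1000000 in
private lemma s4_key : ∀ a b : Equiv.Perm (Fin 4), a * b = b * a → a ≠ 1 → b ≠ 1 →
    (a * a = 1 ∧ ∀ x, a x ≠ x) ∨ (b * b = 1 ∧ ∀ x, b x ≠ x) ∨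
      ∃ g, g * a * g⁻¹ = b := by decide

set_option maxHeartbeats 1000000 in
private lemma s4_dbl : ∀ a b : Equiv.Perm (Fin 4), (a * a = 1 ∧ ∀ x, a x ≠ x) →
    (b * b = 1 ∧ ∀ x, b x ≠ x) → ∃ g, g * a * g⁻¹ = b := by decide

set_option maxHeartbeats 1000000 in
private lemma s3_key : ∀ a b : Equiv.Perm (Fin 3), a * b = b * a → a ≠ 1 → b ≠ 1 →
    ∃ g, g * a * g⁻¹ = b := by decide

private lemma s2_key : ∀ a g : Equiv.Perm (Fin 2), g * a = a * g := by decide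

private lemma s1_key : ∀ a g : Equiv.Perm (Fin 1), g * a = a * g := by decide

/-- In `Sym(n)` for `n ≤ 4`, any two edges of the commuting conjugacy class graph share
a vertex. -/
lemma no_two_disjoint_edges {n : ℕ} (hn1 : 1 ≤ n) (hn : n ≤ 4)
    {a b c d : NCClass (Equiv.Perm (Fin n))}
    (hab : (cccGraph _).Adj a b) (hcd : (cccGraph _).Adj c d)
    (hac : a ≠ c) (had : a ≠ d) (hbc : b ≠ c) (hbd : b ≠ d) : False := by
  obtain ⟨x, y, hx, hy, hxy, hxc, hyc, hne1⟩ := adj_destruct hab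
  obtain ⟨z, w, hz, hw, hzw, hzc, hwc, hne2⟩ := adj_destruct hcd
  interval_cases n
  · exact hxc (Subgroup.mem_center_iff.2 fun g => s1_key x g)
  · exact hxc (Subgroup.mem_center_iff.2 fun g => s2_key x g)
  · obtain ⟨g, hg⟩ := s3_key x y hxy (rep_ne_one hxc) (rep_ne_one hyc)
    apply hne1
    apply Subtype.ext
    rw [← hx, ← hy]
    exact ConjClasses.mk_eq_mk_iff_isConj.2 (isConj_iff.2 ⟨g, hg⟩)
  · -- n = 4
    have h1 : (x * x = 1 ∧ ∀ t, x t ≠ t) ∨ (y * y = 1 ∧ ∀ t, y t ≠ t) := by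
      rcases s4_key x y hxy (rep_ne_one hxc) (rep_ne_one hyc) with h | h | ⟨g, hg⟩
      · exact Or.inl h
      · exact Or.inr h
      · exfalso
        apply hne1
        apply Subtype.ext
        rw [← hx, ← hy]
        exact ConjClasses.mk_eq_mk_iff_isConj.2 (isConj_iff.2 ⟨g, hg⟩)
    have h2 : (z * z = 1 ∧ ∀ t, z t ≠ t) ∨ (w * w = 1 ∧ ∀ t, w t ≠ t) := by
      rcases s4_key z w hzw (rep_ne_one hzc) (rep_ne_one hwc) with h | h | ⟨g, hg⟩
      · exact Or.inl h
      · exact Or.inr h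
      · exfalso
        apply hne2
        apply Subtype.ext
        rw [← hz, ← hw]
        exact ConjClasses.mk_eq_mk_iff_isConj.2 (isConj_iff.2 ⟨g, hg⟩)
    -- each case identifies two of the four distinct classes
    rcases h1 with h1 | h1 <;> rcases h2 with h2 | h2
    · obtain ⟨g, hg⟩ := s4_dbl x z h1 h2
      apply hac
      apply Subtype.ext
      rw [← hx, ← hz]
      exact ConjClasses.mk_eq_mk_iff_isConj.2 (isConj_iff.2 ⟨g, hg⟩)
    · obtain ⟨g, hg⟩ := s4_dbl x w h1 h2
      apply had
      apply Subtype.ext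
      rw [← hx, ← hw]
      exact ConjClasses.mk_eq_mk_iff_isConj.2 (isConj_iff.2 ⟨g, hg⟩)
    · obtain ⟨g, hg⟩ := s4_dbl y z h1 h2
      apply hbc
      apply Subtype.ext
      rw [← hy, ← hz]
      exact ConjClasses.mk_eq_mk_iff_isConj.2 (isConj_iff.2 ⟨g, hg⟩)
    · obtain ⟨g, hg⟩ := s4_dbl y w h1 h2
      apply hbd
      apply Subtype.ext
      rw [← hy, ← hw]
      exact ConjClasses.mk_eq_mk_iff_isConj.2 (isConj_iff.2 ⟨g, hg⟩)

lemma small_split_threshold {n : ℕ} (hn1 : 1 ≤ n) (hn : n ≤ 4) :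
    IsSplit (cccGraph (Equiv.Perm (Fin n))) ∧ IsThreshold (cccGraph (Equiv.Perm (Fin n))) := by
  have hC4 : ¬ HasInducedCycle (cccGraph (Equiv.Perm (Fin n))) 4 := by
    rintro ⟨f, hinj, hadj⟩
    exact no_two_disjoint_edges hn1 hn
      ((hadj 0 1).2 (Or.inl (by decide)))
      ((hadj 2 3).2 (Or.inl (by decide)))
      (fun h => (by decide : ((0 : ZMod 4) ≠ 2)) (hinj h))
      (fun h => (by decide : ((0 : ZMod 4) ≠ 3)) (hinj h))
      (fun h => (by decide : ((1 : ZMod 4) ≠ 2)) (hinj h))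
      (fun h => (by decide : ((1 : ZMod 4) ≠ 3)) (hinj h))
  have hC5 : ¬ HasInducedCycle (cccGraph (Equiv.Perm (Fin n))) 5 := by
    rintro ⟨f, hinj, hadj⟩
    exact no_two_disjoint_edges hn1 hn
      ((hadj 0 1).2 (Or.inl (by decide)))
      ((hadj 2 3).2 (Or.inl (by decide)))
      (fun h => (by decide : ((0 : ZMod 5) ≠ 2)) (hinj h))
      (fun h => (by decide : ((0 : ZMod 5) ≠ 3)) (hinj h))
      (fun h => (by decide : ((1 : ZMod 5) ≠ 2)) (hinj h))
      (fun h => (by decide : ((1 : ZMod 5) ≠ 3)) (hinj h))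
  have h2K2 : ¬ Has2K2 (cccGraph (Equiv.Perm (Fin n))) := by
    rintro ⟨a, b, c, d, hab, hac, had, hbc, hbd, hcd, h1, h2, -, -, -, -⟩
    exact no_two_disjoint_edges hn1 hn h1 h2 hac had hbc hbd
  have hP4 : ¬ HasInducedP4 (cccGraph (Equiv.Perm (Fin n))) := by
    rintro ⟨a, b, c, d, hab, hac, had, hbc, hbd, hcd, h1, h2, h3, -, -, -⟩
    exact no_two_disjoint_edges hn1 hn h1 h3 hac had hbc hbd
  exact ⟨⟨hC4, hC5, h2K2⟩, ⟨hP4, hC4, hC5, h2K2⟩⟩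

end CCCAux
namespace CCCAux

set_option linter.unusedSectionVars false

open Equiv

/-! ### Rotation lemmas -/

lemma finRotate_pow_apply (m j : ℕ) (x : Fin (m + 1)) :
    ((finRotate (m + 1)) ^ j) x = x + (j : Fin (m + 1)) := by
  induction j with
  | zero => simp
  | succ i ih =>
      rw [pow_succ', Equiv.Perm.mul_apply, ih, finRotate_succ_apply, Nat.cast_succ,
        add_assoc]

lemma finRotate_reach (m : ℕ) (x y : Fin (m + 1)) :
    ∃ i : ℕ, ((finRotate (m + 1)) ^ i) x = y := by
  refine ⟨(y - x).val, ?_⟩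
  rw [finRotate_pow_apply, Fin.cast_val_eq_self]
  exact add_sub_cancel x y

lemma finRotate_pow_eq_one_iff (m j : ℕ) :
    ((finRotate (m + 1)) ^ j) = 1 ↔ (m + 1) ∣ j := by
  constructor
  · intro h
    have := congrArg (fun f : Equiv.Perm (Fin (m + 1)) => f 0) h
    simp only [finRotate_pow_apply, Equiv.Perm.one_apply, zero_add] at this
    exact (Fin.natCast_eq_zero).1 this
  · intro h
    ext x
    rw [finRotate_pow_apply]
    have : ((j : ℕ) : Fin (m + 1)) = 0 := (Fin.natCast_eq_zero).2 h
    simp [this]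

/-! ### Embedding a permutation along a sum decomposition -/

variable {A B γ : Type*}

def emb (E : A ⊕ B ≃ γ) (σ : Equiv.Perm A) (τ : Equiv.Perm B) : Equiv.Perm γ :=
  E.permCongr (Equiv.sumCongr σ τ)

lemma emb_apply_inl (E : A ⊕ B ≃ γ) (σ : Equiv.Perm A) (τ : Equiv.Perm B) (x : A) :
    emb E σ τ (E (Sum.inl x)) = E (Sum.inl (σ x)) := by
  simp [emb]

lemma emb_apply_inr (E : A ⊕ B ≃ γ) (σ : Equiv.Perm A) (τ : Equiv.Perm B) (x : B) :
    emb E σ τ (E (Sum.inr x)) = E (Sum.inr (τ x)) := by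
  simp [emb]

lemma emb_mul (E : A ⊕ B ≃ γ) (σ σ' : Equiv.Perm A) (τ τ' : Equiv.Perm B) :
    emb E σ τ * emb E σ' τ' = emb E (σ * σ') (τ * τ') := by
  ext y
  simp only [emb, Equiv.Perm.mul_apply, Equiv.permCongr_apply, Equiv.symm_apply_apply]
  rcases hz : E.symm y with z | z <;> simp [Equiv.Perm.mul_apply]

lemma emb_one (E : A ⊕ B ≃ γ) : emb E 1 1 = (1 : Equiv.Perm γ) := by
  ext y
  have hy : E (E.symm y) = y := E.apply_symm_apply y
  simp only [emb, Equiv.permCongr_apply]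
  rcases hz : E.symm y with z | z <;> rw [hz] at hy <;>
    simp [Equiv.sumCongr_apply, hy]

lemma emb_pow (E : A ⊕ B ≃ γ) (σ : Equiv.Perm A) (τ : Equiv.Perm B) (j : ℕ) :
    (emb E σ τ) ^ j = emb E (σ ^ j) (τ ^ j) := by
  induction j with
  | zero => simp [pow_zero, emb_one]
  | succ i ih => rw [pow_succ, pow_succ, pow_succ, ih, emb_mul]

end CCCAux
namespace CCCAux

set_option linter.unusedSectionVars false

open Equiv

variable {G : Type*} [Group G]

lemma pow_eq_one_of_conj {g x y : G} (h : g * x * g⁻¹ = y) {j : ℕ} (hx : x ^ j = 1) :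
    y ^ j = 1 := by
  rw [← h, conj_pow, hx]; group

lemma pow_eq_one_of_conj' {g x y : G} (h : g * x * g⁻¹ = y) {j : ℕ} (hy : y ^ j = 1) :
    x ^ j = 1 := by
  have h2 : g⁻¹ * y * g⁻¹⁻¹ = x := by rw [← h]; group
  exact pow_eq_one_of_conj h2 hy

variable {α : Type*} [DecidableEq α]

lemma conj_apply_fix {π g : Equiv.Perm α} {x : α} (h : (g * π * g⁻¹) x = x) :
    π (g⁻¹ x) = g⁻¹ x := by
  have h1 : g (π (g⁻¹ x)) = x := by simpa [Equiv.Perm.mul_apply] using h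
  have h2 := congrArg (fun z => g⁻¹ z) h1
  simpa using h2

lemma conj_apply_move {π g : Equiv.Perm α} {x : α} (h : (g * π * g⁻¹) x ≠ x) :
    π (g⁻¹ x) ≠ g⁻¹ x := by
  intro hc
  apply h
  rw [Equiv.Perm.mul_apply, Equiv.Perm.mul_apply, hc]; simp

set_option maxHeartbeats 1000000 in
lemma caseA (m : ℕ) (hm : 3 ≤ m) (p l : ℕ) (hnl : m + 3 = p * l) (hl3 : 3 ≤ l)
    (hp2 : 2 ≤ p) : Has2K2 (cccGraph (Equiv.Perm (Fin (m + 3)))) := by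
  have h3n : 3 ≤ m + 3 := by omega
  have keymul1 : p * 3 ≤ p * l := Nat.mul_le_mul_left p hl3
  have keymul2 : 2 * l ≤ p * l := Nat.mul_le_mul_right l hp2
  have hpn : p < m + 3 := by omega
  have h2pn : p * 2 < m + 3 := by omega
  have hln : l < m + 3 := by omega
  -- the full (m+3)-cycle c
  set c : Equiv.Perm (Fin (m + 3)) := finRotate (m + 3) with hcdef
  have hcpow : ∀ (j : ℕ) (x : Fin (m + 3)), (c ^ j) x = x + (j : Fin (m + 3)) :=
    fun j x => finRotate_pow_apply (m + 2) j x
  have hcone : ∀ j : ℕ, c ^ j = 1 ↔ (m + 3) ∣ j := fun j => finRotate_pow_eq_one_iff (m + 2) j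
  have hcne1 : ∀ j : ℕ, 0 < j → j < m + 3 → c ^ j ≠ 1 := by
    intro j h1 h2 h
    rw [hcone] at h
    have := Nat.le_of_dvd h1 h
    omega
  have hceq1 : c ^ (m + 3) = 1 := (hcone _).2 dvd_rfl
  have hcmove : ∀ x : Fin (m + 3), c x ≠ x := by
    intro x h
    have h1 : (c ^ 1) x = x + ((1 : ℕ) : Fin (m + 3)) := hcpow 1 x
    rw [pow_one, h] at h1
    have h2 : x + (0 : Fin (m + 3)) = x + ((1 : ℕ) : Fin (m + 3)) := by
      rw [add_zero]; exact h1
    have h4 := (Fin.natCast_eq_zero).1 (add_left_cancel h2).symm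
    have := Nat.le_of_dvd (by omega) h4
    omega
  have hcreach : ∀ y : Fin (m + 3), c y ≠ y → ∃ i : ℕ, (c ^ i) 0 = y :=
    fun y _ => finRotate_reach (m + 2) 0 y
  -- the embedded (m+1)-cycle δ, fixing a and b
  have hadd : (m + 1) + 2 = m + 3 := by omega
  set E : (Fin (m + 1) ⊕ Fin 2) ≃ Fin (m + 3) := finSumFinEquiv.trans (finCongr hadd)
    with hEdef
  set r : Equiv.Perm (Fin (m + 1)) := finRotate (m + 1) with hrdef
  set δ : Equiv.Perm (Fin (m + 3)) := emb E r 1 with hδdef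
  set av : Fin (m + 3) := E (Sum.inr 0) with havdef
  set bv : Fin (m + 3) := E (Sum.inr 1) with hbvdef
  set x0 : Fin (m + 3) := E (Sum.inl 0) with hx0def
  have hrpow : ∀ (j : ℕ) (x : Fin (m + 1)), (r ^ j) x = x + (j : Fin (m + 1)) :=
    fun j x => finRotate_pow_apply m j x
  have hrmove : ∀ x : Fin (m + 1), r x ≠ x := by
    intro x h
    have h1 : (r ^ 1) x = x + ((1 : ℕ) : Fin (m + 1)) := hrpow 1 x
    rw [pow_one, h] at h1
    have h2 : x + (0 : Fin (m + 1)) = x + ((1 : ℕ) : Fin (m + 1)) := by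
      rw [add_zero]; exact h1
    have h4 := (Fin.natCast_eq_zero).1 (add_left_cancel h2).symm
    have := Nat.le_of_dvd (by omega) h4
    omega
  have hab : av ≠ bv := by
    intro h
    have := E.injective h
    simp at this
  have hδa : δ av = av := by
    rw [hδdef, havdef, emb_apply_inr]
    rfl
  have hδb : δ bv = bv := by
    rw [hδdef, hbvdef, emb_apply_inr]
    rfl
  have hδx0 : δ x0 ≠ x0 := by
    rw [hδdef, hx0def, emb_apply_inl]
    intro h
    exact hrmove 0 (E.injective h |> Sum.inl.inj)
  have hδfix : ∀ y : Fin (m + 3), δ y = y → y = av ∨ y = bv := by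
    intro y h
    have hy : E (E.symm y) = y := E.apply_symm_apply y
    rcases hz : E.symm y with z | z
    · exfalso
      rw [hz] at hy
      rw [← hy, hδdef, emb_apply_inl] at h
      exact hrmove z (E.injective h |> Sum.inl.inj)
    · rw [hz] at hy
      have hz01 : z = 0 ∨ z = 1 := by
        rcases z with ⟨zv, hzv⟩
        interval_cases zv
        · exact Or.inl rfl
        · exact Or.inr rfl
      rcases hz01 with rfl | rfl
      · left; rw [← hy]
      · right; rw [← hy]
  have hδreach : ∀ y : Fin (m + 3), δ y ≠ y → ∃ i : ℕ, (δ ^ i) x0 = y := by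
    intro y h
    have hy : E (E.symm y) = y := E.apply_symm_apply y
    rcases hz : E.symm y with z | z
    · rw [hz] at hy
      obtain ⟨i, hi⟩ := finRotate_reach m 0 z
      refine ⟨i, ?_⟩
      rw [hδdef, emb_pow, one_pow, hx0def, emb_apply_inl, hi, hy]
    · exfalso
      rw [hz] at hy
      apply h
      rw [← hy, hδdef, emb_apply_inr]
      rfl
  have hδne1 : ∀ j : ℕ, 0 < j → j < m + 1 → δ ^ j ≠ 1 := by
    intro j h1 h2 h
    rw [hδdef, emb_pow, one_pow] at h
    have h3 := congrArg (fun f : Equiv.Perm (Fin (m + 3)) => f (E (Sum.inl 0))) h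
    simp only [emb_apply_inl, Equiv.Perm.one_apply] at h3
    have h4 : (r ^ j) 0 = 0 := Sum.inl.inj (E.injective h3)
    rw [hrpow, zero_add] at h4
    rw [Fin.natCast_eq_zero] at h4
    have := Nat.le_of_dvd h1 h4
    omega
  have hδeq1 : δ ^ (m + 1) = 1 := by
    rw [hδdef, emb_pow, one_pow, (finRotate_pow_eq_one_iff m (m + 1)).2 dvd_rfl, emb_one]
  -- the power X of the big cycle
  set X : Equiv.Perm (Fin (m + 3)) := c ^ p with hXdef
  have hXmove : ∀ x : Fin (m + 3), X x ≠ x := by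
    intro x h
    have h1 := hcpow p x
    rw [hXdef] at h
    rw [h] at h1
    have h2 : x + (0 : Fin (m + 3)) = x + ((p : ℕ) : Fin (m + 3)) := by
      rw [add_zero]; exact h1
    have h4 := (Fin.natCast_eq_zero).1 (add_left_cancel h2).symm
    have := Nat.le_of_dvd (by omega) h4
    omega
  have hXpow : ∀ j : ℕ, X ^ j = c ^ (p * j) := fun j => by rw [hXdef, ← pow_mul]
  have hXne1 : ∀ j : ℕ, 0 < j → p * j < m + 3 → X ^ j ≠ 1 := by
    intro j h1 h2 h
    rw [hXpow] at h
    exact hcne1 (p * j) (by positivity) h2 h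
  have hXl : X ^ l = 1 := by rw [hXpow, ← hnl, hceq1]
  -- vertices
  set s0 : Equiv.Perm (Fin (m + 3)) := Equiv.swap av bv with hs0def
  have hs0move : s0 av ≠ av := by
    rw [hs0def, Equiv.swap_apply_left]
    exact hab.symm
  have hs0sq : s0 ^ 2 = 1 := by
    rw [hs0def, pow_two, Equiv.swap_mul_self]
  set vT : NCClass (Equiv.Perm (Fin (m + 3))) :=
    ⟨ConjClasses.mk s0, s0, rfl, not_mem_center_of_moves h3n hs0move⟩ with hvT
  set vD : NCClass (Equiv.Perm (Fin (m + 3))) :=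
    ⟨ConjClasses.mk δ, δ, rfl, not_mem_center_of_moves h3n hδx0⟩ with hvD
  set vC : NCClass (Equiv.Perm (Fin (m + 3))) :=
    ⟨ConjClasses.mk c, c, rfl, not_mem_center_of_moves h3n (hcmove 0)⟩ with hvC
  set vX : NCClass (Equiv.Perm (Fin (m + 3))) :=
    ⟨ConjClasses.mk X, X, rfl, not_mem_center_of_moves h3n (hXmove 0)⟩ with hvX
  -- distinctness
  have hne_TD : ¬ IsConj s0 δ := by
    apply not_isConj_of_key
    intro g h
    exact hδne1 2 (by omega) (by omega) (pow_eq_one_of_conj h hs0sq)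
  have hne_TC : ¬ IsConj s0 c := by
    apply not_isConj_of_key
    intro g h
    exact hcne1 2 (by omega) (by omega) (pow_eq_one_of_conj h hs0sq)
  have hne_TX : ¬ IsConj s0 X := by
    apply not_isConj_of_key
    intro g h
    exact hXne1 2 (by omega) h2pn (pow_eq_one_of_conj h hs0sq)
  have hne_DC : ¬ IsConj δ c := by
    apply not_isConj_of_key
    intro g h
    exact hcne1 (m + 1) (by omega) (by omega) (pow_eq_one_of_conj h hδeq1)
  have hne_DX : ¬ IsConj δ X := by
    apply not_isConj_of_key
    intro g h
    have hX1 := pow_eq_one_of_conj h hδeq1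
    rw [hXpow] at hX1
    rw [hcone] at hX1
    -- (m+3) ∣ p * (m+1) is impossible
    have h2 : (m + 3) ∣ p * (m + 3) := ⟨p, by ring⟩
    have e1 : p * (m + 3) = p * (m + 1) + p * 2 := by ring
    rw [e1] at h2
    have h3 := (Nat.dvd_add_right hX1).1 h2
    have h4 := Nat.le_of_dvd (by omega) h3
    omega
  have hne_CX : ¬ IsConj c X := by
    apply not_isConj_of_key
    intro g h
    exact hcne1 l (by omega) hln (pow_eq_one_of_conj' h hXl)
  -- edges
  have hadj_TD : (cccGraph (Equiv.Perm (Fin (m + 3)))).Adj vT vD :=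
    adj_intro (not_mem_center_of_moves h3n hs0move) (not_mem_center_of_moves h3n hδx0)
      ((swap_commute_of_fixes hδa hδb).symm.eq) hne_TD
  have hadj_CX : (cccGraph (Equiv.Perm (Fin (m + 3)))).Adj vC vX :=
    adj_intro (not_mem_center_of_moves h3n (hcmove 0)) (not_mem_center_of_moves h3n (hXmove 0))
      (((Commute.refl c).pow_right p).eq) hne_CX
  -- non-edges
  have hK1 : ∀ g : Equiv.Perm (Fin (m + 3)), ¬ Commute (g * c * g⁻¹) s0 := by
    intro g hcm
    rcases commute_swap_cases hab hcm with ⟨h1, h2⟩ | ⟨h1, h2⟩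
    · exact hcmove (g⁻¹ av) (conj_apply_fix h1)
    · have hsq : ((g * c * g⁻¹) ^ 2) av = av := by
        rw [pow_two, Equiv.Perm.mul_apply, h1, h2]
      rw [conj_pow] at hsq
      have h3 := conj_apply_fix hsq
      have h4 := pow_eq_one_of_fix hcreach (hcmove (g⁻¹ av)) h3
      exact hcne1 2 (by omega) (by omega) h4
  have hK2 : ∀ g : Equiv.Perm (Fin (m + 3)), ¬ Commute (g * X * g⁻¹) s0 := by
    intro g hcm
    rcases commute_swap_cases hab hcm with ⟨h1, h2⟩ | ⟨h1, h2⟩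
    · exact hXmove (g⁻¹ av) (conj_apply_fix h1)
    · have hsq : ((g * X * g⁻¹) ^ 2) av = av := by
        rw [pow_two, Equiv.Perm.mul_apply, h1, h2]
      rw [conj_pow] at hsq
      have h3 := conj_apply_fix hsq
      rw [hXpow] at h3
      have h4 := pow_eq_one_of_fix hcreach (hcmove (g⁻¹ av)) h3
      exact hcne1 (p * 2) (by omega) h2pn h4
  have hK3 : ∀ g : Equiv.Perm (Fin (m + 3)), ¬ Commute (g * c * g⁻¹) δ := by
    intro g hcm
    rcases cent2 hδx0 hδreach hab hδa hδb hδfix hcm with ⟨t, ht⟩ | ⟨t, ht⟩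
    · have h1 : (g * c * g⁻¹) av = av := by
        rw [ht]; exact perm_pow_apply_fix hδa t
      exact hcmove (g⁻¹ av) (conj_apply_fix h1)
    · have hπa : (g * c * g⁻¹) av = bv := by
        rw [ht, Equiv.Perm.mul_apply, Equiv.swap_apply_left]
        exact perm_pow_apply_fix hδb t
      have hπb : (g * c * g⁻¹) bv = av := by
        rw [ht, Equiv.Perm.mul_apply, Equiv.swap_apply_right]
        exact perm_pow_apply_fix hδa t
      have hsq : ((g * c * g⁻¹) ^ 2) av = av := by
        rw [pow_two, Equiv.Perm.mul_apply, hπa, hπb]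
      rw [conj_pow] at hsq
      have h3 := conj_apply_fix hsq
      have h4 := pow_eq_one_of_fix hcreach (hcmove (g⁻¹ av)) h3
      exact hcne1 2 (by omega) (by omega) h4
  have hK4 : ∀ g : Equiv.Perm (Fin (m + 3)), ¬ Commute (g * X * g⁻¹) δ := by
    intro g hcm
    rcases cent2 hδx0 hδreach hab hδa hδb hδfix hcm with ⟨t, ht⟩ | ⟨t, ht⟩
    · have h1 : (g * X * g⁻¹) av = av := by
        rw [ht]; exact perm_pow_apply_fix hδa t
      exact hXmove (g⁻¹ av) (conj_apply_fix h1)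
    · have hπa : (g * X * g⁻¹) av = bv := by
        rw [ht, Equiv.Perm.mul_apply, Equiv.swap_apply_left]
        exact perm_pow_apply_fix hδb t
      have hπb : (g * X * g⁻¹) bv = av := by
        rw [ht, Equiv.Perm.mul_apply, Equiv.swap_apply_right]
        exact perm_pow_apply_fix hδa t
      have hsq : ((g * X * g⁻¹) ^ 2) av = av := by
        rw [pow_two, Equiv.Perm.mul_apply, hπa, hπb]
      rw [conj_pow] at hsq
      have h3 := conj_apply_fix hsq
      rw [hXpow] at h3
      have h4 := pow_eq_one_of_fix hcreach (hcmove (g⁻¹ av)) h3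
      exact hcne1 (p * 2) (by omega) h2pn h4
  -- assemble
  refine ⟨vT, vD, vC, vX, ?_, ?_, ?_, ?_, ?_, ?_, hadj_TD, hadj_CX, ?_, ?_, ?_, ?_⟩
  · exact vert_ne rfl rfl hne_TD
  · exact vert_ne rfl rfl hne_TC
  · exact vert_ne rfl rfl hne_TX
  · exact vert_ne rfl rfl hne_DC
  · exact vert_ne rfl rfl hne_DX
  · exact vert_ne rfl rfl hne_CX
  · exact fun h => not_adj rfl rfl hK1 h.symm
  · exact fun h => not_adj rfl rfl hK2 h.symm
  · exact fun h => not_adj rfl rfl hK3 h.symm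
  · exact fun h => not_adj rfl rfl hK4 h.symm

end CCCAux
namespace CCCAux

set_option linter.unusedSectionVars false

open Equiv

set_option maxHeartbeats 1000000 in
lemma caseB (m t : ℕ) (hm : 4 ≤ m) (hmt : m = 2 * t) :
    Has2K2 (cccGraph (Equiv.Perm (Fin (m + 3)))) := by
  have h3n : 3 ≤ m + 3 := by omega
  -- the embedded (m+1)-cycle δ, fixing av and bv
  have hadd : (m + 1) + 2 = m + 3 := by omega
  set E : (Fin (m + 1) ⊕ Fin 2) ≃ Fin (m + 3) := finSumFinEquiv.trans (finCongr hadd)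
    with hEdef
  set r : Equiv.Perm (Fin (m + 1)) := finRotate (m + 1) with hrdef
  set δ : Equiv.Perm (Fin (m + 3)) := emb E r 1 with hδdef
  set av : Fin (m + 3) := E (Sum.inr 0) with havdef
  set bv : Fin (m + 3) := E (Sum.inr 1) with hbvdef
  set x0 : Fin (m + 3) := E (Sum.inl 0) with hx0def
  have hrpow : ∀ (j : ℕ) (x : Fin (m + 1)), (r ^ j) x = x + (j : Fin (m + 1)) :=
    fun j x => finRotate_pow_apply m j x
  have hrmove : ∀ x : Fin (m + 1), r x ≠ x := by
    intro x h
    have h1 : (r ^ 1) x = x + ((1 : ℕ) : Fin (m + 1)) := hrpow 1 x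
    rw [pow_one, h] at h1
    have h2 : x + (0 : Fin (m + 1)) = x + ((1 : ℕ) : Fin (m + 1)) := by
      rw [add_zero]; exact h1
    have h4 := (Fin.natCast_eq_zero).1 (add_left_cancel h2).symm
    have := Nat.le_of_dvd (by omega) h4
    omega
  have hab : av ≠ bv := by
    intro h
    have := E.injective h
    simp at this
  have hδa : δ av = av := by
    rw [hδdef, havdef, emb_apply_inr]
    rfl
  have hδb : δ bv = bv := by
    rw [hδdef, hbvdef, emb_apply_inr]
    rfl
  have hδx0 : δ x0 ≠ x0 := by
    rw [hδdef, hx0def, emb_apply_inl]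
    intro h
    exact hrmove 0 (E.injective h |> Sum.inl.inj)
  have hδfix : ∀ y : Fin (m + 3), δ y = y → y = av ∨ y = bv := by
    intro y h
    have hy : E (E.symm y) = y := E.apply_symm_apply y
    rcases hz : E.symm y with z | z
    · exfalso
      rw [hz] at hy
      rw [← hy, hδdef, emb_apply_inl] at h
      exact hrmove z (E.injective h |> Sum.inl.inj)
    · rw [hz] at hy
      have hz01 : z = 0 ∨ z = 1 := by
        rcases z with ⟨zv, hzv⟩
        interval_cases zv
        · exact Or.inl rfl
        · exact Or.inr rfl
      rcases hz01 with rfl | rfl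
      · left; rw [← hy]
      · right; rw [← hy]
  have hδreach : ∀ y : Fin (m + 3), δ y ≠ y → ∃ i : ℕ, (δ ^ i) x0 = y := by
    intro y h
    have hy : E (E.symm y) = y := E.apply_symm_apply y
    rcases hz : E.symm y with z | z
    · rw [hz] at hy
      obtain ⟨i, hi⟩ := finRotate_reach m 0 z
      refine ⟨i, ?_⟩
      rw [hδdef, emb_pow, one_pow, hx0def, emb_apply_inl, hi, hy]
    · exfalso
      rw [hz] at hy
      apply h
      rw [← hy, hδdef, emb_apply_inr]
      rfl
  have hδne1 : ∀ j : ℕ, 0 < j → j < m + 1 → δ ^ j ≠ 1 := by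
    intro j h1 h2 h
    rw [hδdef, emb_pow, one_pow] at h
    have h3 := congrArg (fun f : Equiv.Perm (Fin (m + 3)) => f (E (Sum.inl 0))) h
    simp only [emb_apply_inl, Equiv.Perm.one_apply] at h3
    have h4 : (r ^ j) 0 = 0 := Sum.inl.inj (E.injective h3)
    rw [hrpow, zero_add] at h4
    rw [Fin.natCast_eq_zero] at h4
    have := Nat.le_of_dvd h1 h4
    omega
  have hδeq1 : δ ^ (m + 1) = 1 := by
    rw [hδdef, emb_pow, one_pow, (finRotate_pow_eq_one_iff m (m + 1)).2 dvd_rfl, emb_one]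
  -- the embedded (m+2)-cycle c', fixing only a'
  have hadd' : (m + 2) + 1 = m + 3 := by omega
  set F : (Fin (m + 2) ⊕ Fin 1) ≃ Fin (m + 3) := finSumFinEquiv.trans (finCongr hadd')
    with hFdef
  set q : Equiv.Perm (Fin (m + 2)) := finRotate (m + 2) with hqdef
  set c' : Equiv.Perm (Fin (m + 3)) := emb F q 1 with hc'def
  set a' : Fin (m + 3) := F (Sum.inr 0) with ha'def
  set y0 : Fin (m + 3) := F (Sum.inl 0) with hy0def
  have hqpow : ∀ (j : ℕ) (x : Fin (m + 2)), (q ^ j) x = x + (j : Fin (m + 2)) :=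
    fun j x => finRotate_pow_apply (m + 1) j x
  have hqmove : ∀ x : Fin (m + 2), q x ≠ x := by
    intro x h
    have h1 : (q ^ 1) x = x + ((1 : ℕ) : Fin (m + 2)) := hqpow 1 x
    rw [pow_one, h] at h1
    have h2 : x + (0 : Fin (m + 2)) = x + ((1 : ℕ) : Fin (m + 2)) := by
      rw [add_zero]; exact h1
    have h4 := (Fin.natCast_eq_zero).1 (add_left_cancel h2).symm
    have := Nat.le_of_dvd (by omega) h4
    omega
  have hc'a : c' a' = a' := by
    rw [hc'def, ha'def, emb_apply_inr]
    rfl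
  have hc'y0 : c' y0 ≠ y0 := by
    rw [hc'def, hy0def, emb_apply_inl]
    intro h
    exact hqmove 0 (F.injective h |> Sum.inl.inj)
  have hc'fix : ∀ y : Fin (m + 3), c' y = y → y = a' := by
    intro y h
    have hy : F (F.symm y) = y := F.apply_symm_apply y
    rcases hz : F.symm y with z | z
    · exfalso
      rw [hz] at hy
      rw [← hy, hc'def, emb_apply_inl] at h
      exact hqmove z (F.injective h |> Sum.inl.inj)
    · rw [hz] at hy
      have hz0 : z = 0 := Subsingleton.elim z 0
      rw [hz0] at hy
      rw [← hy]
  have hc'reach : ∀ y : Fin (m + 3), c' y ≠ y → ∃ i : ℕ, (c' ^ i) y0 = y := by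
    intro y h
    have hy : F (F.symm y) = y := F.apply_symm_apply y
    rcases hz : F.symm y with z | z
    · rw [hz] at hy
      obtain ⟨i, hi⟩ := finRotate_reach (m + 1) 0 z
      refine ⟨i, ?_⟩
      rw [hc'def, emb_pow, one_pow, hy0def, emb_apply_inl, hi, hy]
    · exfalso
      rw [hz] at hy
      apply h
      rw [← hy, hc'def, emb_apply_inr]
      rfl
  have hc'one : ∀ j : ℕ, c' ^ j = 1 ↔ (m + 2) ∣ j := by
    intro j
    constructor
    · intro h
      rw [hc'def, emb_pow, one_pow] at h
      have h3 := congrArg (fun f : Equiv.Perm (Fin (m + 3)) => f (F (Sum.inl 0))) h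
      simp only [emb_apply_inl, Equiv.Perm.one_apply] at h3
      have h4 : (q ^ j) 0 = 0 := Sum.inl.inj (F.injective h3)
      rw [hqpow, zero_add] at h4
      rwa [Fin.natCast_eq_zero] at h4
    · intro h
      rw [hc'def, emb_pow, one_pow, (finRotate_pow_eq_one_iff (m + 1) j).2 h, emb_one]
  have hc'ne1 : ∀ j : ℕ, 0 < j → j < m + 2 → c' ^ j ≠ 1 := by
    intro j h1 h2 h
    rw [hc'one] at h
    have := Nat.le_of_dvd h1 h
    omega
  -- Y = square of c'
  set Y : Equiv.Perm (Fin (m + 3)) := c' ^ 2 with hYdef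
  have hYpow : ∀ j : ℕ, Y ^ j = c' ^ (2 * j) := fun j => by rw [hYdef, ← pow_mul]
  have hYfix : ∀ y : Fin (m + 3), Y y = y → y = a' := by
    intro y h
    by_cases hcy : c' y = y
    · exact hc'fix y hcy
    · exfalso
      have h2 := pow_eq_one_of_fix hc'reach hcy (by rw [← hYdef]; exact h)
      exact hc'ne1 2 (by omega) (by omega) h2
  have hYmove : ∀ y : Fin (m + 3), c' y ≠ y → Y y ≠ y := by
    intro y hy h
    have h2 := pow_eq_one_of_fix hc'reach hy (by rw [← hYdef]; exact h)
    exact hc'ne1 2 (by omega) (by omega) h2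
  have hYy0 : Y y0 ≠ y0 := hYmove y0 hc'y0
  -- s0 = swap av bv
  set s0 : Equiv.Perm (Fin (m + 3)) := Equiv.swap av bv with hs0def
  have hs0move : s0 av ≠ av := by
    rw [hs0def, Equiv.swap_apply_left]
    exact hab.symm
  have hs0sq : s0 ^ 2 = 1 := by
    rw [hs0def, pow_two, Equiv.swap_mul_self]
  -- vertices
  set vT : NCClass (Equiv.Perm (Fin (m + 3))) :=
    ⟨ConjClasses.mk s0, s0, rfl, not_mem_center_of_moves h3n hs0move⟩ with hvT
  set vD : NCClass (Equiv.Perm (Fin (m + 3))) :=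
    ⟨ConjClasses.mk δ, δ, rfl, not_mem_center_of_moves h3n hδx0⟩ with hvD
  set vC : NCClass (Equiv.Perm (Fin (m + 3))) :=
    ⟨ConjClasses.mk c', c', rfl, not_mem_center_of_moves h3n hc'y0⟩ with hvC
  set vY : NCClass (Equiv.Perm (Fin (m + 3))) :=
    ⟨ConjClasses.mk Y, Y, rfl, not_mem_center_of_moves h3n hYy0⟩ with hvY
  -- distinctness
  have hne_TD : ¬ IsConj s0 δ := by
    apply not_isConj_of_key
    intro g h
    exact hδne1 2 (by omega) (by omega) (pow_eq_one_of_conj h hs0sq)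
  have hne_TC : ¬ IsConj s0 c' := by
    apply not_isConj_of_key
    intro g h
    exact hc'ne1 2 (by omega) (by omega) (pow_eq_one_of_conj h hs0sq)
  have hne_TY : ¬ IsConj s0 Y := by
    apply not_isConj_of_key
    intro g h
    have h2 := pow_eq_one_of_conj h hs0sq
    rw [hYpow] at h2
    exact hc'ne1 4 (by omega) (by omega) h2
  have hne_DC : ¬ IsConj δ c' := by
    apply not_isConj_of_key
    intro g h
    exact hc'ne1 (m + 1) (by omega) (by omega) (pow_eq_one_of_conj h hδeq1)
  have hne_DY : ¬ IsConj δ Y := by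
    apply not_isConj_of_key
    intro g h
    have h2 := pow_eq_one_of_conj h hδeq1
    rw [hYpow, hc'one] at h2
    have h3 : (m + 2) ∣ 2 * (m + 2) := ⟨2, by ring⟩
    have h4 : 2 * (m + 2) = 2 * (m + 1) + 2 := by ring
    rw [h4] at h3
    have h5 := (Nat.dvd_add_right h2).1 h3
    have := Nat.le_of_dvd (by omega) h5
    omega
  have hne_CY : ¬ IsConj c' Y := by
    apply not_isConj_of_key
    intro g h
    have hY1 : Y ^ (t + 1) = 1 := by
      rw [hYpow, hc'one]
      exact ⟨1, by omega⟩
    have h2 := pow_eq_one_of_conj' h hY1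
    exact hc'ne1 (t + 1) (by omega) (by omega) h2
  -- edges
  have hadj_TD : (cccGraph (Equiv.Perm (Fin (m + 3)))).Adj vT vD :=
    adj_intro (not_mem_center_of_moves h3n hs0move) (not_mem_center_of_moves h3n hδx0)
      ((swap_commute_of_fixes hδa hδb).symm.eq) hne_TD
  have hadj_CY : (cccGraph (Equiv.Perm (Fin (m + 3)))).Adj vC vY :=
    adj_intro (not_mem_center_of_moves h3n hc'y0) (not_mem_center_of_moves h3n hYy0)
      (((Commute.refl c').pow_right 2).eq) hne_CY
  -- non-edges
  have hK1 : ∀ g : Equiv.Perm (Fin (m + 3)), ¬ Commute (g * c' * g⁻¹) s0 := by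
    intro g hcm
    rcases commute_swap_cases hab hcm with ⟨h1, h2⟩ | ⟨h1, h2⟩
    · have e1 : g⁻¹ av = a' := hc'fix _ (conj_apply_fix h1)
      have e2 : g⁻¹ bv = a' := hc'fix _ (conj_apply_fix h2)
      exact hab (g⁻¹.injective (e1.trans e2.symm))
    · have hsq : ((g * c' * g⁻¹) ^ 2) av = av := by
        rw [pow_two, Equiv.Perm.mul_apply, h1, h2]
      rw [conj_pow] at hsq
      have hmove : c' (g⁻¹ av) ≠ g⁻¹ av := conj_apply_move (by rw [h1]; exact hab.symm)
      have h4 := pow_eq_one_of_fix hc'reach hmove (conj_apply_fix hsq)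
      exact hc'ne1 2 (by omega) (by omega) h4
  have hK2 : ∀ g : Equiv.Perm (Fin (m + 3)), ¬ Commute (g * Y * g⁻¹) s0 := by
    intro g hcm
    rcases commute_swap_cases hab hcm with ⟨h1, h2⟩ | ⟨h1, h2⟩
    · have e1 : g⁻¹ av = a' := hYfix _ (conj_apply_fix h1)
      have e2 : g⁻¹ bv = a' := hYfix _ (conj_apply_fix h2)
      exact hab (g⁻¹.injective (e1.trans e2.symm))
    · have hsq : ((g * Y * g⁻¹) ^ 2) av = av := by
        rw [pow_two, Equiv.Perm.mul_apply, h1, h2]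
      rw [conj_pow] at hsq
      have hYm : Y (g⁻¹ av) ≠ g⁻¹ av := conj_apply_move (by rw [h1]; exact hab.symm)
      have hmove : c' (g⁻¹ av) ≠ g⁻¹ av := by
        intro hcf
        exact hYm (by rw [hYdef, pow_two, Equiv.Perm.mul_apply, hcf, hcf])
      have hfix2 := conj_apply_fix hsq
      rw [hYpow] at hfix2
      have h4 := pow_eq_one_of_fix hc'reach hmove hfix2
      exact hc'ne1 (2 * 2) (by omega) (by omega) h4
  have hK3 : ∀ g : Equiv.Perm (Fin (m + 3)), ¬ Commute (g * c' * g⁻¹) δ := by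
    intro g hcm
    rcases cent2 hδx0 hδreach hab hδa hδb hδfix hcm with ⟨u, hu⟩ | ⟨u, hu⟩
    · have h1 : (g * c' * g⁻¹) av = av := by
        rw [hu]; exact perm_pow_apply_fix hδa u
      have h2 : (g * c' * g⁻¹) bv = bv := by
        rw [hu]; exact perm_pow_apply_fix hδb u
      have e1 : g⁻¹ av = a' := hc'fix _ (conj_apply_fix h1)
      have e2 : g⁻¹ bv = a' := hc'fix _ (conj_apply_fix h2)
      exact hab (g⁻¹.injective (e1.trans e2.symm))
    · have hπa : (g * c' * g⁻¹) av = bv := by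
        rw [hu, Equiv.Perm.mul_apply, Equiv.swap_apply_left]
        exact perm_pow_apply_fix hδb u
      have hπb : (g * c' * g⁻¹) bv = av := by
        rw [hu, Equiv.Perm.mul_apply, Equiv.swap_apply_right]
        exact perm_pow_apply_fix hδa u
      have hsq : ((g * c' * g⁻¹) ^ 2) av = av := by
        rw [pow_two, Equiv.Perm.mul_apply, hπa, hπb]
      rw [conj_pow] at hsq
      have hmove : c' (g⁻¹ av) ≠ g⁻¹ av := conj_apply_move (by rw [hπa]; exact hab.symm)
      have h4 := pow_eq_one_of_fix hc'reach hmove (conj_apply_fix hsq)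
      exact hc'ne1 2 (by omega) (by omega) h4
  have hK4 : ∀ g : Equiv.Perm (Fin (m + 3)), ¬ Commute (g * Y * g⁻¹) δ := by
    intro g hcm
    rcases cent2 hδx0 hδreach hab hδa hδb hδfix hcm with ⟨u, hu⟩ | ⟨u, hu⟩
    · have h1 : (g * Y * g⁻¹) av = av := by
        rw [hu]; exact perm_pow_apply_fix hδa u
      have h2 : (g * Y * g⁻¹) bv = bv := by
        rw [hu]; exact perm_pow_apply_fix hδb u
      have e1 : g⁻¹ av = a' := hYfix _ (conj_apply_fix h1)
      have e2 : g⁻¹ bv = a' := hYfix _ (conj_apply_fix h2)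
      exact hab (g⁻¹.injective (e1.trans e2.symm))
    · have hπa : (g * Y * g⁻¹) av = bv := by
        rw [hu, Equiv.Perm.mul_apply, Equiv.swap_apply_left]
        exact perm_pow_apply_fix hδb u
      have hπb : (g * Y * g⁻¹) bv = av := by
        rw [hu, Equiv.Perm.mul_apply, Equiv.swap_apply_right]
        exact perm_pow_apply_fix hδa u
      have hsq : ((g * Y * g⁻¹) ^ 2) av = av := by
        rw [pow_two, Equiv.Perm.mul_apply, hπa, hπb]
      rw [conj_pow] at hsq
      have hYm : Y (g⁻¹ av) ≠ g⁻¹ av := conj_apply_move (by rw [hπa]; exact hab.symm)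
      have hmove : c' (g⁻¹ av) ≠ g⁻¹ av := by
        intro hcf
        exact hYm (by rw [hYdef, pow_two, Equiv.Perm.mul_apply, hcf, hcf])
      have hfix2 := conj_apply_fix hsq
      rw [hYpow] at hfix2
      have h4 := pow_eq_one_of_fix hc'reach hmove hfix2
      exact hc'ne1 (2 * 2) (by omega) (by omega) h4
  -- assemble
  refine ⟨vT, vD, vC, vY, ?_, ?_, ?_, ?_, ?_, ?_, hadj_TD, hadj_CY, ?_, ?_, ?_, ?_⟩
  · exact vert_ne rfl rfl hne_TD
  · exact vert_ne rfl rfl hne_TC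
  · exact vert_ne rfl rfl hne_TY
  · exact vert_ne rfl rfl hne_DC
  · exact vert_ne rfl rfl hne_DY
  · exact vert_ne rfl rfl hne_CY
  · exact fun h => not_adj rfl rfl hK1 h.symm
  · exact fun h => not_adj rfl rfl hK2 h.symm
  · exact fun h => not_adj rfl rfl hK3 h.symm
  · exact fun h => not_adj rfl rfl hK4 h.symm

end CCCAux
namespace CCCAux

set_option linter.unusedSectionVars false

open Equiv

private def u5 : Equiv.Perm (Fin 5) := Equiv.swap 0 2 * Equiv.swap 0 1
private def s34 : Equiv.Perm (Fin 5) := Equiv.swap 3 4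
private def z5 : Equiv.Perm (Fin 5) := u5 * s34
private def w5 : Equiv.Perm (Fin 5) := Equiv.swap 0 3 * Equiv.swap 0 2 * Equiv.swap 0 1
private def v5 : Equiv.Perm (Fin 5) := w5 ^ 2

private lemma hu3 : u5 ^ 3 = 1 := by decide
private lemma hu_ne1 : u5 ≠ 1 := by decide
private lemma hu2_ne1 : u5 ^ 2 ≠ 1 := by decide
private lemma hu4_ne1 : u5 ^ 4 ≠ 1 := by decide
private lemma hu0 : u5 0 ≠ 0 := by decide
private lemma hu_f3 : u5 3 = 3 := by decide
private lemma hu_f4 : u5 4 = 4 := by decide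
private lemma h34 : (3 : Fin 5) ≠ 4 := by decide
private lemma hufix : ∀ y : Fin 5, u5 y = y → y = 3 ∨ y = 4 := by decide
private lemma hv2 : v5 ^ 2 = 1 := by decide
private lemma hv_ne1 : v5 ≠ 1 := by decide
private lemma hvfix : ∀ x : Fin 5, v5 x = x → x = 4 := by decide
private lemma hv0 : v5 0 ≠ 0 := by decide
private lemma hw4 : w5 ^ 4 = 1 := by decide
private lemma hw2_ne1 : w5 ^ 2 ≠ 1 := by decide
private lemma hw0 : w5 0 ≠ 0 := by decide
private lemma hz4 : z5 ^ 4 = u5 := by decide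
private lemma hz3_ne1 : z5 ^ 3 ≠ 1 := by decide
private lemma hz2_ne1 : z5 ^ 2 ≠ 1 := by decide
private lemma hz0 : z5 0 ≠ 0 := by decide
private lemma hcomm_uz : u5 * z5 = z5 * u5 := by decide
private lemma hcomm_vw : v5 * w5 = w5 * v5 := by decide
private lemma hs34_0 : (Equiv.swap (3 : Fin 5) 4) 0 = 0 := by decide
private lemma hs34_1 : (Equiv.swap (3 : Fin 5) 4) 1 = 1 := by decide
private lemma hs34sq : (Equiv.swap (3 : Fin 5) 4) ^ 2 = 1 := by decide
private lemma h01 : (0 : Fin 5) ≠ 1 := by decide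

private lemma hureach : ∀ y : Fin 5, u5 y ≠ y → ∃ i : ℕ, (u5 ^ i) 0 = y := by
  intro y hy
  fin_cases y
  · exact ⟨0, by decide⟩
  · exact ⟨1, by decide⟩
  · exact ⟨2, by decide⟩
  · exact absurd (by decide : u5 3 = 3) hy
  · exact absurd (by decide : u5 4 = 4) hy

private lemma h3t (t : ℕ) : u5 ^ (3 * t) = 1 := by
  rw [pow_mul, hu3, one_pow]

private lemma h4t (t : ℕ) : u5 ^ (4 * t) = u5 ^ t := by
  rw [show 4 * t = 3 * t + t from by ring, pow_add, h3t, one_mul]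

/-- Core S₅ lemma: an involution with a unique fixed point cannot commute with `u5`. -/
private lemma key5v (π : Equiv.Perm (Fin 5)) (hcm : Commute π u5)
    (hπ2 : π ^ 2 = 1) (hπ1 : π ≠ 1)
    (huniq : ∀ x y : Fin 5, π x = x → π y = y → x = y) : False := by
  rcases cent2 hu0 hureach h34 hu_f3 hu_f4 hufix hcm with ⟨t, ht⟩ | ⟨t, ht⟩
  · -- π = u5 ^ t
    have h2 : u5 ^ (t * 2) = 1 := by rw [pow_mul, ← ht, hπ2]
    have h3 : u5 ^ (t * 3) = 1 := by rw [show t * 3 = 3 * t from by ring, h3t]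
    have hπeq1 : π = 1 := by
      have e1 : u5 ^ (t * 3) = u5 ^ (t * 2) * u5 ^ t := by
        rw [← pow_add]; ring_nf
      rw [h2, one_mul] at e1
      rw [ht, ← e1, h3]
    exact hπ1 hπeq1
  · -- π = u5 ^ t * s34
    have hcomm_ts : Commute (u5 ^ t) (Equiv.swap (3 : Fin 5) 4) :=
      swap_commute_of_fixes (perm_pow_apply_fix hu_f3 t) (perm_pow_apply_fix hu_f4 t)
    have hsq : π ^ 2 = u5 ^ (t * 2) := by
      rw [ht, hcomm_ts.mul_pow, hs34sq, mul_one, ← pow_mul]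
    have h2 : u5 ^ (t * 2) = 1 := by rw [← hsq, hπ2]
    have h3 : u5 ^ (t * 3) = 1 := by rw [show t * 3 = 3 * t from by ring, h3t]
    have hut1 : u5 ^ t = 1 := by
      have e1 : u5 ^ (t * 3) = u5 ^ (t * 2) * u5 ^ t := by
        rw [← pow_add]; ring_nf
      rw [h2, one_mul] at e1
      rw [← e1, h3]
    rw [hut1, one_mul] at ht
    have f0 : π 0 = 0 := by rw [ht]; exact hs34_0
    have f1 : π 1 = 1 := by rw [ht]; exact hs34_1
    exact h01 (huniq 0 1 f0 f1)

/-- Core S₅ lemma: an element of order four cannot commute with `u5`. -/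
private lemma key5w (π : Equiv.Perm (Fin 5)) (hcm : Commute π u5)
    (hπ4 : π ^ 4 = 1) (hπ2 : π ^ 2 ≠ 1) : False := by
  rcases cent2 hu0 hureach h34 hu_f3 hu_f4 hufix hcm with ⟨t, ht⟩ | ⟨t, ht⟩
  · have h4 : u5 ^ (t * 4) = 1 := by rw [pow_mul, ← ht, hπ4]
    have hut1 : u5 ^ t = 1 := by
      rw [show t * 4 = 4 * t from by ring, h4t] at h4
      exact h4
    apply hπ2
    rw [ht, hut1, one_pow]
  · have hcomm_ts : Commute (u5 ^ t) (Equiv.swap (3 : Fin 5) 4) :=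
      swap_commute_of_fixes (perm_pow_apply_fix hu_f3 t) (perm_pow_apply_fix hu_f4 t)
    have hsq : π ^ 2 = u5 ^ (t * 2) := by
      rw [ht, hcomm_ts.mul_pow, hs34sq, mul_one, ← pow_mul]
    have h4 : π ^ 4 = u5 ^ (t * 4) := by
      rw [show (4 : ℕ) = 2 * 2 from rfl, pow_mul, hsq, ← pow_mul]
      ring_nf
    have hut1 : u5 ^ t = 1 := by
      rw [hπ4, show t * 4 = 4 * t from by ring, h4t] at h4
      exact h4.symm
    apply hπ2
    rw [hsq, pow_mul, hut1, one_pow]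

set_option maxHeartbeats 1000000 in
lemma case5 : Has2K2 (cccGraph (Equiv.Perm (Fin 5))) := by
  have h35 : (3 : ℕ) ≤ 5 := by omega
  set vV : NCClass (Equiv.Perm (Fin 5)) :=
    ⟨ConjClasses.mk v5, v5, rfl, not_mem_center_of_moves h35 hv0⟩ with hvV
  set vW : NCClass (Equiv.Perm (Fin 5)) :=
    ⟨ConjClasses.mk w5, w5, rfl, not_mem_center_of_moves h35 hw0⟩ with hvW
  set vU : NCClass (Equiv.Perm (Fin 5)) :=
    ⟨ConjClasses.mk u5, u5, rfl, not_mem_center_of_moves h35 hu0⟩ with hvU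
  set vZ : NCClass (Equiv.Perm (Fin 5)) :=
    ⟨ConjClasses.mk z5, z5, rfl, not_mem_center_of_moves h35 hz0⟩ with hvZ
  have hne_VW : ¬ IsConj v5 w5 := by
    apply not_isConj_of_key
    intro g h
    exact hw2_ne1 (pow_eq_one_of_conj h hv2)
  have hne_VU : ¬ IsConj v5 u5 := by
    apply not_isConj_of_key
    intro g h
    exact hu2_ne1 (pow_eq_one_of_conj h hv2)
  have hne_VZ : ¬ IsConj v5 z5 := by
    apply not_isConj_of_key
    intro g h
    exact hz2_ne1 (pow_eq_one_of_conj h hv2)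
  have hne_WU : ¬ IsConj w5 u5 := by
    apply not_isConj_of_key
    intro g h
    exact hu4_ne1 (pow_eq_one_of_conj h hw4)
  have hne_WZ : ¬ IsConj w5 z5 := by
    apply not_isConj_of_key
    intro g h
    have := pow_eq_one_of_conj h hw4
    rw [hz4] at this
    exact hu_ne1 this
  have hne_UZ : ¬ IsConj u5 z5 := by
    apply not_isConj_of_key
    intro g h
    exact hz3_ne1 (pow_eq_one_of_conj h hu3)
  have hadj_VW : (cccGraph (Equiv.Perm (Fin 5))).Adj vV vW :=
    adj_intro (not_mem_center_of_moves h35 hv0) (not_mem_center_of_moves h35 hw0)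
      hcomm_vw hne_VW
  have hadj_UZ : (cccGraph (Equiv.Perm (Fin 5))).Adj vU vZ :=
    adj_intro (not_mem_center_of_moves h35 hu0) (not_mem_center_of_moves h35 hz0)
      hcomm_uz hne_UZ
  -- conjugates of v5 do not commute with u5
  have keyV : ∀ g : Equiv.Perm (Fin 5), ¬ Commute (g * v5 * g⁻¹) u5 := by
    intro g hcm
    apply key5v _ hcm
    · exact pow_eq_one_of_conj rfl hv2
    · rw [Ne, conj_eq_one_iff]
      exact hv_ne1
    · intro x y hx hy
      have hx' := hvfix _ (conj_apply_fix hx)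
      have hy' := hvfix _ (conj_apply_fix hy)
      exact g⁻¹.injective (hx'.trans hy'.symm)
  have keyW : ∀ g : Equiv.Perm (Fin 5), ¬ Commute (g * w5 * g⁻¹) u5 := by
    intro g hcm
    apply key5w _ hcm
    · exact pow_eq_one_of_conj rfl hw4
    · rw [conj_pow, Ne, conj_eq_one_iff]
      exact hw2_ne1
  have hK_VU : ∀ g : Equiv.Perm (Fin 5), ¬ Commute (g * v5 * g⁻¹) u5 := keyV
  have hK_VZ : ∀ g : Equiv.Perm (Fin 5), ¬ Commute (g * v5 * g⁻¹) z5 := by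
    intro g hcm
    have h4 := hcm.pow_right 4
    rw [hz4] at h4
    exact keyV g h4
  have hK_WU : ∀ g : Equiv.Perm (Fin 5), ¬ Commute (g * w5 * g⁻¹) u5 := keyW
  have hK_WZ : ∀ g : Equiv.Perm (Fin 5), ¬ Commute (g * w5 * g⁻¹) z5 := by
    intro g hcm
    have h4 := hcm.pow_right 4
    rw [hz4] at h4
    exact keyW g h4
  refine ⟨vV, vW, vU, vZ, ?_, ?_, ?_, ?_, ?_, ?_, hadj_VW, hadj_UZ, ?_, ?_, ?_, ?_⟩
  · exact vert_ne rfl rfl hne_VW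
  · exact vert_ne rfl rfl hne_VU
  · exact vert_ne rfl rfl hne_VZ
  · exact vert_ne rfl rfl hne_WU
  · exact vert_ne rfl rfl hne_WZ
  · exact vert_ne rfl rfl hne_UZ
  · exact not_adj rfl rfl hK_VU
  · exact not_adj rfl rfl hK_VZ
  · exact not_adj rfl rfl hK_WU
  · exact not_adj rfl rfl hK_WZ

end CCCAux
namespace CCCAux

lemma has2K2_large (n : ℕ) (hn : 5 ≤ n) : Has2K2 (cccGraph (Equiv.Perm (Fin n))) := by
  rcases eq_or_lt_of_le hn with h5 | h6
  · rw [← h5]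
    exact case5
  · obtain ⟨m, rfl⟩ : ∃ m, n = m + 3 := ⟨n - 3, by omega⟩
    rcases Nat.even_or_odd (m + 3) with he | ho
    · obtain ⟨l, hl⟩ := he
      exact caseA m (by omega) 2 l (by omega) (by omega) (by omega)
    · obtain ⟨k, hk⟩ := ho
      exact caseB m (k - 1) (by omega) (by omega)

end CCCAux

theorem ccc_sym_split_threshold_iff (n : ℕ) (hn : 1 ≤ n) :
    (IsSplit (cccGraph (Equiv.Perm (Fin n))) ↔ n ≤ 4) ∧
    (IsThreshold (cccGraph (Equiv.Perm (Fin n))) ↔ n ≤ 4) := by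
  by_cases h : n ≤ 4
  · obtain ⟨hs, ht⟩ := CCCAux.small_split_threshold hn h
    exact ⟨⟨fun _ => h, fun _ => hs⟩, ⟨fun _ => h, fun _ => ht⟩⟩
  · have h2k2 := CCCAux.has2K2_large n (by omega)
    constructor
    · constructor
      · intro hs
        exact absurd h2k2 hs.2.2
      · intro h4
        exact absurd h4 h
    · constructor
      · intro ht
        exact absurd h2k2 ht.2.2.2
      · intro h4
        exact absurd h4 h
end

section
/- Let D_{2n} be the dihedral group of order 2n with n ≥ 3. Then Γ_CCC(D_{2n}) is always a cograph and a chordal graph; moreover, if n ≡ 2 (mod 4), then Γ_CCC(D_{2n}) contains an induced 2K_2, so it is neither a split graph nor a threshold graph. -/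
namespace CCCAux

open DihedralGroup

lemma adj_iff {G : Type*} [Group G] (c d : NCClass G) :
    (cccGraph G).Adj c d ↔ c ≠ d ∧ ∃ a b : G, ConjClasses.mk a = c.1 ∧
      ConjClasses.mk b = d.1 ∧ a * b = b * a := by
  constructor
  · rintro ⟨hne, a, b, ha, hb, hP⟩
    exact ⟨hne, a, b, ha, hb,
      hP a (Subgroup.subset_closure (by simp)) b (Subgroup.subset_closure (by simp))⟩
  · rintro ⟨hne, a, b, ha, hb, hab⟩
    refine ⟨hne, a, b, ha, hb, ?_⟩
    intro x hx y hy
    have hC : Subgroup.closure {a, b} ≤ Subgroup.centralizer {a, b} := by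
      rw [Subgroup.closure_le]
      rintro z hz
      simp only [Set.mem_insert_iff, Set.mem_singleton_iff] at hz
      rcases hz with rfl | rfl <;>
        · rw [SetLike.mem_coe, Subgroup.mem_centralizer_iff]
          rintro w hw
          simp only [Set.mem_insert_iff, Set.mem_singleton_iff] at hw
          rcases hw with rfl | rfl <;> simp [hab]
    have hxa : a * x = x * a := (Subgroup.mem_centralizer_iff.1 (hC hx)) a (by simp)
    have hxb : b * x = x * b := (Subgroup.mem_centralizer_iff.1 (hC hx)) b (by simp)
    have hS : Subgroup.closure {a, b} ≤ Subgroup.centralizer {x} := by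
      rw [Subgroup.closure_le]
      rintro z hz
      simp only [Set.mem_insert_iff, Set.mem_singleton_iff] at hz
      rcases hz with rfl | rfl <;>
        · rw [SetLike.mem_coe, Subgroup.mem_centralizer_iff]
          rintro w hw
          simp only [Set.mem_singleton_iff] at hw
          subst hw
          first | exact hxa.symm | exact hxb.symm
    exact (Subgroup.mem_centralizer_iff.1 (hS hy)) x (by simp)

lemma rep_not_center {G : Type*} [Group G] {c : NCClass G} {a : G}
    (ha : ConjClasses.mk a = c.1) : a ∉ Subgroup.center G := by
  obtain ⟨x, hx, hxc⟩ := c.2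
  have hconj : IsConj x a := by
    rw [← ConjClasses.mk_eq_mk_iff_isConj, hx, ha]
  obtain ⟨g, hg⟩ := isConj_iff.1 hconj
  intro hmem
  apply hxc
  have hx' : x = g⁻¹ * a * g := by rw [← hg]; group
  rw [hx', (Subgroup.mem_center_iff.1 hmem g⁻¹)]
  simpa using hmem

variable {n : ℕ}

lemma r_inv (i : ZMod n) : (r i)⁻¹ = r (-i) := rfl
lemma sr_inv (i : ZMod n) : (sr i)⁻¹ = sr i := rfl

lemma r_center {i : ZMod n} (h : 2 * i = 0) : r i ∈ Subgroup.center (DihedralGroup n) := by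
  rw [Subgroup.mem_center_iff]
  rintro (k | k) <;> simp only [r_mul_r, sr_mul_r, r_mul_sr]
  · rw [add_comm]
  · congr 1; linear_combination h

lemma of_sr_center {j : ZMod n} (h : sr j ∈ Subgroup.center (DihedralGroup n)) :
    (2 : ZMod n) = 0 := by
  have := Subgroup.mem_center_iff.1 h (r 1)
  simp only [r_mul_sr, sr_mul_r] at this
  simp only [sr.injEq] at this
  linear_combination -this

lemma comm_r_sr {i j : ZMod n} (h : r i * sr j = sr j * r i) : 2 * i = 0 := by
  simp only [r_mul_sr, sr_mul_r, sr.injEq] at h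
  linear_combination -h

lemma comm_sr_sr {i j : ZMod n} (h : sr i * sr j = sr j * sr i) : 2 * i = 2 * j := by
  simp only [sr_mul_sr, r.injEq] at h
  linear_combination -h

lemma mk_r_eq {a : DihedralGroup n} {i : ZMod n}
    (h : ConjClasses.mk a = ConjClasses.mk (r i)) : a = r i ∨ a = r (-i) := by
  have : IsConj (r i) a := (ConjClasses.mk_eq_mk_iff_isConj.1 h).symm
  obtain ⟨c, hc⟩ := isConj_iff.1 this
  rcases c with k | k
  · left; rw [← hc, r_inv]; simp only [r_mul_r]; congr 1; ring
  · right; rw [← hc, sr_inv]; simp only [sr_mul_r, sr_mul_sr]; congr 1; ring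

lemma mk_sr_eq {a : DihedralGroup n} {j : ZMod n}
    (h : ConjClasses.mk a = ConjClasses.mk (sr j)) : ∃ k : ZMod n, a = sr (j + 2 * k) := by
  have : IsConj (sr j) a := (ConjClasses.mk_eq_mk_iff_isConj.1 h).symm
  obtain ⟨c, hc⟩ := isConj_iff.1 this
  rcases c with k | k
  · exact ⟨-k, by rw [← hc, r_inv]; simp only [r_mul_sr, sr_mul_r]; congr 1; ring⟩
  · exact ⟨k - j, by rw [← hc, sr_inv]; simp only [sr_mul_sr, r_mul_sr, sr_mul_r]; congr 1; ring⟩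

lemma mk_sr_conj (j k : ZMod n) :
    ConjClasses.mk (sr (j + 2 * k)) = ConjClasses.mk (sr j) := by
  rw [ConjClasses.mk_eq_mk_iff_isConj]
  refine isConj_iff.2 ⟨r k, ?_⟩
  rw [r_inv]; simp only [r_mul_sr, sr_mul_r]; congr 1; ring

lemma mk_r_ne_mk_sr (i j : ZMod n) :
    ConjClasses.mk (r i) ≠ ConjClasses.mk (sr j) := by
  intro h
  obtain ⟨c, hc⟩ := isConj_iff.1 (ConjClasses.mk_eq_mk_iff_isConj.1 h)
  rcases c with k | k <;> simp [r_inv, sr_inv] at hc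

end CCCAux

namespace CCCAux
open DihedralGroup

lemma of_r_center {n : ℕ} {i : ZMod n} (h : r i ∈ Subgroup.center (DihedralGroup n)) :
    2 * i = 0 := by
  have := Subgroup.mem_center_iff.1 h (sr 0)
  simp only [sr_mul_r, r_mul_sr, sr.injEq] at this
  linear_combination this

lemma zmod_cast_ne {m a b : ℕ} (ha : a < m) (hb : b < m) (hab : a ≠ b) :
    (a : ZMod m) ≠ (b : ZMod m) := by
  intro h
  haveI : NeZero m := ⟨by omega⟩
  apply hab
  have := congrArg ZMod.val h
  rwa [ZMod.val_natCast_of_lt ha, ZMod.val_natCast_of_lt hb] at this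

lemma trans_adj {n : ℕ} {c1 c2 c3 : NCClass (DihedralGroup n)}
    (h12 : (cccGraph (DihedralGroup n)).Adj c1 c2)
    (h23 : (cccGraph (DihedralGroup n)).Adj c2 c3) (h13 : c1 ≠ c3) :
    (cccGraph (DihedralGroup n)).Adj c1 c3 := by
  rw [adj_iff] at h12 h23 ⊢
  obtain ⟨-, a, b, ha, hb, hab⟩ := h12
  obtain ⟨-, b', c', hb', hc', hbc⟩ := h23
  have hA := rep_not_center ha
  have hB' := rep_not_center hb'
  have hC' := rep_not_center hc'
  have hbb' : ConjClasses.mk b' = ConjClasses.mk b := by rw [hb, hb']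
  refine ⟨h13, ?_⟩
  rcases b with j | j
  · -- b = r j
    obtain ⟨i, rfl⟩ : ∃ i, a = r i := by
      rcases a with i | i
      · exact ⟨i, rfl⟩
      · exact absurd (r_center (comm_r_sr hab.symm)) (rep_not_center hb)
    rcases b' with j' | j'
    · obtain ⟨l, rfl⟩ : ∃ l, c' = r l := by
        rcases c' with l | l
        · exact ⟨l, rfl⟩
        · exact absurd (r_center (comm_r_sr hbc)) hB'
      exact ⟨r i, r l, ha, hc', by rw [r_mul_r, r_mul_r, add_comm]⟩
    · exact absurd hbb' (mk_r_ne_mk_sr j j').symm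
  · -- b = sr j
    obtain ⟨i, rfl, hij⟩ : ∃ i, a = sr i ∧ 2 * i = 2 * j := by
      rcases a with i | i
      · exact absurd (r_center (comm_r_sr hab)) hA
      · exact ⟨i, rfl, comm_sr_sr hab⟩
    obtain ⟨k, rfl⟩ := mk_sr_eq hbb'
    obtain ⟨l, rfl, hl⟩ : ∃ l, c' = sr l ∧ 2 * l = 2 * (j + 2 * k) := by
      rcases c' with l | l
      · exact absurd (r_center (comm_r_sr hbc.symm)) hC'
      · exact ⟨l, rfl, (comm_sr_sr hbc).symm⟩
    refine ⟨sr i, sr (l - 2 * k), ha, ?_, ?_⟩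
    · rw [← hc', show l - 2 * k = l + 2 * (-k) by ring]
      exact mk_sr_conj l (-k)
    · simp only [sr_mul_sr]
      congr 1
      linear_combination hl - hij

lemma not_adj_r_sr {n : ℕ} {i j : ZMod n} (h2i : 2 * i ≠ 0)
    {c d : NCClass (DihedralGroup n)}
    (hc : c.1 = ConjClasses.mk (r i)) (hd : d.1 = ConjClasses.mk (sr j)) :
    ¬ (cccGraph (DihedralGroup n)).Adj c d := by
  rw [adj_iff]
  rintro ⟨-, a, b, ha, hb, hab⟩
  rw [hc] at ha; rw [hd] at hb
  obtain ⟨k, rfl⟩ := mk_sr_eq hb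
  rcases mk_r_eq ha with rfl | rfl
  · exact h2i (comm_r_sr hab)
  · apply h2i
    have h' := comm_r_sr hab
    linear_combination -h'

end CCCAux

namespace CCCAux

lemma cograph_of_trans {V : Type*} (Γ : SimpleGraph V)
    (h : ∀ a b c : V, Γ.Adj a b → Γ.Adj b c → a ≠ c → Γ.Adj a c) : IsCograph Γ := by
  rintro ⟨a, b, c, d, hab, hac, had, hbc, hbd, hcd, Aab, Abc, Acd, nAac, nAad, nAbd⟩
  exact nAac (h a b c Aab Abc hac)

lemma chordal_of_trans {V : Type*} (Γ : SimpleGraph V)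
    (h : ∀ a b c : V, Γ.Adj a b → Γ.Adj b c → a ≠ c → Γ.Adj a c) : IsChordal Γ := by
  rintro m hm ⟨f, hinj, hf⟩
  have h01 : Γ.Adj (f 0) (f 1) := (hf 0 1).2 (Or.inl (by norm_num))
  have h12 : Γ.Adj (f 1) (f 2) := (hf 1 2).2 (Or.inl (by norm_num))
  have hne : f 0 ≠ f 2 := by
    intro he
    have h02 : (0 : ZMod m) = 2 := hinj he
    exact zmod_cast_ne (show 0 < m by omega) (show 2 < m by omega) (by omega)
      (by exact_mod_cast h02)
  rcases (hf 0 2).1 (h _ _ _ h01 h12 hne) with h' | h'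
  · rw [zero_add] at h'
    exact zmod_cast_ne (show 2 < m by omega) (show 1 < m by omega) (by omega)
      (by exact_mod_cast h')
  · have h'' : (0 : ZMod m) = 3 := by rw [h']; norm_num
    exact zmod_cast_ne (show 0 < m by omega) (show 3 < m by omega) (by omega)
      (by exact_mod_cast h'')

end CCCAux

namespace CCCAux
open DihedralGroup

lemma has2K2 {n : ℕ} (hn : 3 ≤ n) (hmod : n % 4 = 2) :
    Has2K2 (cccGraph (DihedralGroup n)) := by
  have h6 : 6 ≤ n := by omega
  have h2 : (2 : ZMod n) ≠ 0 := by
    have := zmod_cast_ne (show 2 < n by omega) (show 0 < n by omega) (by omega)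
    exact_mod_cast this
  have h3 : (3 : ZMod n) ≠ 0 := by
    have := zmod_cast_ne (show 3 < n by omega) (show 0 < n by omega) (by omega)
    exact_mod_cast this
  have h4 : (4 : ZMod n) ≠ 0 := by
    have := zmod_cast_ne (show 4 < n by omega) (show 0 < n by omega) (by omega)
    exact_mod_cast this
  have h21 : (2 : ZMod n) ≠ 1 := by
    have := zmod_cast_ne (show 2 < n by omega) (show 1 < n by omega) (by omega)
    exact_mod_cast this
  have hr1 : r (1 : ZMod n) ∉ Subgroup.center (DihedralGroup n) := by
    intro h; exact h2 (by simpa using of_r_center h)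
  have hr2 : r (2 : ZMod n) ∉ Subgroup.center (DihedralGroup n) := by
    intro h; exact h4 (by linear_combination of_r_center h)
  have hsr : ∀ j : ZMod n, sr j ∉ Subgroup.center (DihedralGroup n) := fun j h => h2 (of_sr_center h)
  have h21' : 2 * (1 : ZMod n) ≠ 0 := by
    intro h; exact h2 (by linear_combination h)
  have h22' : 2 * (2 : ZMod n) ≠ 0 := by
    intro h; exact h4 (by linear_combination h)
  refine ⟨⟨ConjClasses.mk (r 1), r 1, rfl, hr1⟩, ⟨ConjClasses.mk (r 2), r 2, rfl, hr2⟩,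
    ⟨ConjClasses.mk (sr 0), sr 0, rfl, hsr 0⟩,
    ⟨ConjClasses.mk (sr ((n / 2 : ℕ) : ZMod n)), sr _, rfl, hsr _⟩, ?_, ?_, ?_, ?_, ?_, ?_,
    ?_, ?_, ?_, ?_, ?_, ?_⟩
  · -- mk (r 1) ≠ mk (r 2)
    intro h
    have h' : ConjClasses.mk (r (1 : ZMod n)) = ConjClasses.mk (r 2) := congrArg Subtype.val h
    rcases mk_r_eq h' with he | he <;> rw [r.injEq] at he
    · exact h21 he.symm
    · exact h3 (by linear_combination he)
  · exact fun h => mk_r_ne_mk_sr _ _ (congrArg Subtype.val h)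
  · exact fun h => mk_r_ne_mk_sr _ _ (congrArg Subtype.val h)
  · exact fun h => mk_r_ne_mk_sr _ _ (congrArg Subtype.val h)
  · exact fun h => mk_r_ne_mk_sr _ _ (congrArg Subtype.val h)
  · -- mk (sr 0) ≠ mk (sr (n/2))
    intro h
    have h' : ConjClasses.mk (sr (0 : ZMod n)) =
        ConjClasses.mk (sr ((n / 2 : ℕ) : ZMod n)) := congrArg Subtype.val h
    obtain ⟨k, hk⟩ := mk_sr_eq h'
    rw [sr.injEq] at hk
    haveI : NeZero n := ⟨by omega⟩
    have hk' : ((n / 2 + 2 * k.val : ℕ) : ZMod n) = 0 := by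
      push_cast
      rw [ZMod.natCast_zmod_val]
      linear_combination -hk
    rw [ZMod.natCast_eq_zero_iff] at hk'
    obtain ⟨t, ht⟩ := hk'
    have hpar : (n * t) % 2 = 0 := by
      rw [Nat.mul_mod, show n % 2 = 0 by omega]
      simp
    omega
  · -- Adj (r1) (r2)
    refine (adj_iff _ _).2 ?_
    refine ⟨?_, r 1, r 2, rfl, rfl, by rw [r_mul_r, r_mul_r, add_comm]⟩
    intro h
    have h' : ConjClasses.mk (r (1 : ZMod n)) = ConjClasses.mk (r 2) := congrArg Subtype.val h
    rcases mk_r_eq h' with he | he <;> rw [r.injEq] at he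
    · exact h21 he.symm
    · exact h3 (by linear_combination he)
  · -- Adj (sr 0) (sr n/2)
    refine (adj_iff _ _).2 ?_
    have hhalf : (2 : ZMod n) * ((n / 2 : ℕ) : ZMod n) = 0 := by
      have : ((2 * (n / 2) : ℕ) : ZMod n) = ((n : ℕ) : ZMod n) := by
        congr 1; omega
      rw [ZMod.natCast_self] at this
      push_cast at this
      linear_combination this
    refine ⟨?_, sr 0, sr _, rfl, rfl, ?_⟩
    · intro h
      have h' : ConjClasses.mk (sr (0 : ZMod n)) =
          ConjClasses.mk (sr ((n / 2 : ℕ) : ZMod n)) := congrArg Subtype.val h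
      obtain ⟨k, hk⟩ := mk_sr_eq h'
      rw [sr.injEq] at hk
      haveI : NeZero n := ⟨by omega⟩
      have hk' : ((n / 2 + 2 * k.val : ℕ) : ZMod n) = 0 := by
        push_cast
        rw [ZMod.natCast_zmod_val]
        linear_combination -hk
      rw [ZMod.natCast_eq_zero_iff] at hk'
      obtain ⟨t, ht⟩ := hk'
      have hpar : (n * t) % 2 = 0 := by
        rw [Nat.mul_mod, show n % 2 = 0 by omega]
        simp
      omega
    · rw [sr_mul_sr, sr_mul_sr]
      congr 1
      linear_combination hhalf
  · exact not_adj_r_sr h21' rfl rfl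
  · exact not_adj_r_sr h21' rfl rfl
  · exact not_adj_r_sr h22' rfl rfl
  · exact not_adj_r_sr h22' rfl rfl

end CCCAux

theorem ccc_dihedral (n : ℕ) (hn : 3 ≤ n) :
    IsCograph (cccGraph (DihedralGroup n)) ∧ IsChordal (cccGraph (DihedralGroup n)) ∧
    (n % 4 = 2 → Has2K2 (cccGraph (DihedralGroup n)) ∧
      ¬ IsSplit (cccGraph (DihedralGroup n)) ∧
      ¬ IsThreshold (cccGraph (DihedralGroup n))) := by
  have htrans : ∀ a b c : NCClass (DihedralGroup n),
      (cccGraph (DihedralGroup n)).Adj a b → (cccGraph (DihedralGroup n)).Adj b c →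
      a ≠ c → (cccGraph (DihedralGroup n)).Adj a c :=
    fun _ _ _ h1 h2 h3 => CCCAux.trans_adj h1 h2 h3
  refine ⟨CCCAux.cograph_of_trans _ htrans, CCCAux.chordal_of_trans _ htrans, fun hmod => ?_⟩
  have h2k2 := CCCAux.has2K2 hn hmod
  exact ⟨h2k2, fun hs => hs.2.2 h2k2, fun ht => ht.2.2.2 h2k2⟩
end
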